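/- arXiv:1901.02803 — 4 statements merged into one kernel-verified Lean document; each statement's English description precedes it below -/
import Mathlib

section
/- Let G be a finite group, ℓ a prime, and Z a central subgroup of G whose order is not divisible by ℓ; write Ḡ = G/Z and let π : G → Ḡ be the canonical projection. Then the map Θ sending R to π(R) is a bijection from the set of ℓ-radical subgroups of G onto the set of ℓ-radical subgroups of Ḡ, with inverse sending an ℓ-radical subgroup Q̄ of Ḡ to O_ℓ(π⁻¹(Q̄)). Moreover, two ℓ-radical subgroups R₁, R₂ of G are conjugate in G if and only if Θ(R₁) and Θ(R₂) are conjugate in Ḡ. -/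
set_option maxHeartbeats 1000000

/-- The `ℓ`-core `O_ℓ(G)` of a finite group `G`: the largest normal `ℓ`-subgroup of `G`,
realized as the join of all normal `ℓ`-subgroups. -/
def pCore (ℓ : ℕ) (G : Type) [Group G] : Subgroup G :=
  sSup {N : Subgroup G | N.Normal ∧ IsPGroup ℓ ↥N}

/-- The `ℓ`-core of a subgroup `H` of `G`, viewed again as a subgroup of `G`. -/
def pCoreOf (ℓ : ℕ) {G : Type} [Group G] (H : Subgroup G) : Subgroup G :=
  Subgroup.map H.subtype (pCore ℓ ↥H)

/-- A subgroup `R` of `G` is `ℓ`-radical if `R = O_ℓ(N_G(R))`. -/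
def IsRadicalSubgroup (ℓ : ℕ) {G : Type} [Group G] (R : Subgroup G) : Prop :=
  R = pCoreOf ℓ (Subgroup.normalizer (R : Set G))

/-- Two subgroups of `G` are conjugate in `G`. -/
def SubgroupIsConj {G : Type} [Group G] (R₁ R₂ : Subgroup G) : Prop :=
  ∃ g : G, Subgroup.map (MulAut.conj g).toMonoidHom R₁ = R₂

open Subgroup

section Helpers

variable {G : Type} [Group G] {ℓ : ℕ}

/-- The `ℓ`-core is a normal subgroup. -/
theorem pCore_normal (ℓ : ℕ) (G : Type) [Group G] : (pCore ℓ G).Normal := by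
  constructor
  intro n hn g
  rw [pCore, sSup_eq_iSup'] at hn ⊢
  refine Subgroup.iSup_induction
      (C := fun y => g * y * g⁻¹ ∈
        ⨆ a : {N : Subgroup G | N.Normal ∧ IsPGroup ℓ ↥N}, (a : Subgroup G)) _ hn
      (fun N x hx => ?_) (by simpa using one_mem _) (fun x y hx hy => ?_)
  · exact SetLike.le_def.mp
      (le_iSup (fun N : {N : Subgroup G | N.Normal ∧ IsPGroup ℓ ↥N} => (N : Subgroup G)) N)
      (N.2.1.conj_mem x hx g)
  · have e : g * (x * y) * g⁻¹ = (g * x * g⁻¹) * (g * y * g⁻¹) := by group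
    show g * (x * y) * g⁻¹ ∈ _
    rw [e]
    exact mul_mem hx hy

theorem le_pCore {N : Subgroup G} (h1 : N.Normal) (h2 : IsPGroup ℓ ↥N) : N ≤ pCore ℓ G :=
  le_sSup ⟨h1, h2⟩

theorem pCore_isPGroup [Finite G] (hℓ : ℓ.Prime) : IsPGroup ℓ ↥(pCore ℓ G) := by
  haveI : Fact ℓ.Prime := ⟨hℓ⟩
  have key : ∀ s : Set (Subgroup G), s.Finite →
      (∀ N ∈ s, N.Normal ∧ IsPGroup ℓ ↥N) → IsPGroup ℓ ↥(sSup s) := by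
    intro s hs
    refine Set.Finite.induction_on
      (motive := fun (s : Set (Subgroup G)) _ =>
        (∀ N ∈ s, N.Normal ∧ IsPGroup ℓ ↥N) → IsPGroup ℓ ↥(sSup s)) s hs ?_ ?_
    · intro _; rw [sSup_empty]; exact IsPGroup.of_bot
    · intro a t _ _ ih h
      rw [sSup_insert]
      haveI : a.Normal := (h a (Set.mem_insert a t)).1
      exact IsPGroup.to_sup_of_normal_left (h a (Set.mem_insert a t)).2
        (ih fun N hN => h N (Set.mem_insert_of_mem _ hN))
  exact key _ (Set.toFinite _) (fun N hN => hN)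

theorem pCoreOf_le (H : Subgroup G) : pCoreOf ℓ H ≤ H :=
  map_subtype_le _

theorem pCoreOf_isPGroup [Finite G] (hℓ : ℓ.Prime) (H : Subgroup G) :
    IsPGroup ℓ ↥(pCoreOf ℓ H) :=
  (pCore_isPGroup hℓ).map _

theorem conj_mem_pCoreOf {H : Subgroup G} {h n : G} (hh : h ∈ H) (hn : n ∈ pCoreOf ℓ H) :
    h * n * h⁻¹ ∈ pCoreOf ℓ H := by
  obtain ⟨m, hm, rfl⟩ := hn
  exact ⟨⟨h, hh⟩ * m * ⟨h, hh⟩⁻¹, (pCore_normal ℓ H).conj_mem m hm ⟨h, hh⟩, rfl⟩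

theorem le_normalizer_pCoreOf (H : Subgroup G) : H ≤ (Subgroup.normalizer ((pCoreOf ℓ H) : Set G)) := by
  intro h hh
  rw [Subgroup.mem_normalizer_iff]
  intro n
  constructor
  · exact fun hn => conj_mem_pCoreOf hh hn
  · intro hn
    have h2 := conj_mem_pCoreOf (inv_mem hh) hn
    have e : h⁻¹ * (h * n * h⁻¹) * h⁻¹⁻¹ = n := by group
    rwa [e] at h2

theorem le_pCoreOf {H N : Subgroup G} (hNH : N ≤ H) (hnorm : H ≤ (Subgroup.normalizer (N : Set G)))
    (hp : IsPGroup ℓ ↥N) : N ≤ pCoreOf ℓ H := by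
  have h1 : (N.subgroupOf H).Normal := by
    constructor
    intro n hn g
    have hg := Subgroup.mem_normalizer_iff.mp (hnorm g.2)
    rw [Subgroup.mem_subgroupOf] at hn ⊢
    simpa using (hg n).mp hn
  have h2 : IsPGroup ℓ ↥(N.subgroupOf H) :=
    hp.comap_of_injective H.subtype Subtype.coe_injective
  have h3 : N.subgroupOf H ≤ pCore ℓ H := le_sSup ⟨h1, h2⟩
  have h4 := Subgroup.map_mono (f := H.subtype) h3
  rwa [Subgroup.subgroupOf_map_subtype, inf_eq_left.mpr hNH] at h4

theorem pCoreOf_eq [Finite G] (hℓ : ℓ.Prime) {H M : Subgroup G} (hMH : M ≤ H)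
    (hMn : H ≤ (Subgroup.normalizer (M : Set G))) (hMp : IsPGroup ℓ ↥M)
    (hmax : ∀ N : Subgroup G, N ≤ H → H ≤ (Subgroup.normalizer (N : Set G)) → IsPGroup ℓ ↥N → N ≤ M) :
    pCoreOf ℓ H = M :=
  le_antisymm (hmax _ (pCoreOf_le H) (le_normalizer_pCoreOf H) (pCoreOf_isPGroup hℓ H))
    (le_pCoreOf hMH hMn hMp)

theorem pCoreOf_self [Finite G] (hℓ : ℓ.Prime) {H : Subgroup G} (hp : IsPGroup ℓ ↥H) :
    pCoreOf ℓ H = H :=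
  pCoreOf_eq hℓ le_rfl le_normalizer hp (fun _ hN _ _ => hN)

theorem mem_normalizer_iff_map {K : Subgroup G} {x : G} :
    x ∈ (Subgroup.normalizer (K : Set G)) ↔ Subgroup.map (MulAut.conj x).toMonoidHom K = K := by
  rw [Subgroup.mem_normalizer_iff]
  constructor
  · intro h
    ext y
    rw [Subgroup.mem_map_equiv, MulAut.conj_symm_apply]
    have hy := h (x⁻¹ * y * x)
    rw [show x * (x⁻¹ * y * x) * x⁻¹ = y by group] at hy
    exact hy
  · intro h y
    constructor
    · intro hy
      rw [← h, Subgroup.mem_map_equiv, MulAut.conj_symm_apply]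
      have e : x⁻¹ * (x * y * x⁻¹) * x = y := by group
      rwa [e]
    · intro hy
      rw [← h, Subgroup.mem_map_equiv, MulAut.conj_symm_apply] at hy
      have e : x⁻¹ * (x * y * x⁻¹) * x = y := by group
      rwa [e] at hy

theorem map_conj_map_conj (a b : G) (K : Subgroup G) :
    Subgroup.map (MulAut.conj a).toMonoidHom (Subgroup.map (MulAut.conj b).toMonoidHom K) =
      Subgroup.map (MulAut.conj (a * b)).toMonoidHom K := by
  rw [Subgroup.map_map]
  congr 1
  ext x
  simp only [MonoidHom.comp_apply, MulEquiv.coe_toMonoidHom, MulAut.conj_apply]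
  group

theorem map_conj_one (K : Subgroup G) :
    Subgroup.map (MulAut.conj (1 : G)).toMonoidHom K = K := by
  ext x
  rw [Subgroup.mem_map_equiv, MulAut.conj_symm_apply]
  group

theorem map_conj_inv_eq {x : G} {K L : Subgroup G}
    (h : Subgroup.map (MulAut.conj x).toMonoidHom K = L) :
    Subgroup.map (MulAut.conj x⁻¹).toMonoidHom L = K := by
  rw [← h, map_conj_map_conj, inv_mul_cancel, map_conj_one]

theorem normalizer_le_normalizer_pCoreOf [Finite G] (hℓ : ℓ.Prime) (H : Subgroup G) :
    (Subgroup.normalizer (H : Set G)) ≤ (Subgroup.normalizer ((pCoreOf ℓ H) : Set G)) := by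
  intro x hx
  rw [mem_normalizer_iff_map] at hx ⊢
  have key : ∀ y : G, Subgroup.map (MulAut.conj y).toMonoidHom H = H →
      Subgroup.map (MulAut.conj y).toMonoidHom (pCoreOf ℓ H) ≤ pCoreOf ℓ H := by
    intro y hy
    have hy' : Subgroup.map (MulAut.conj y⁻¹).toMonoidHom H = H := map_conj_inv_eq hy
    apply le_pCoreOf
    · calc Subgroup.map (MulAut.conj y).toMonoidHom (pCoreOf ℓ H)
          ≤ Subgroup.map (MulAut.conj y).toMonoidHom H := Subgroup.map_mono (pCoreOf_le H)
        _ = H := hy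
    · intro h hh
      rw [mem_normalizer_iff_map, map_conj_map_conj]
      have hyh : y⁻¹ * h * y ∈ H := by
        have hmem : MulAut.conj y⁻¹ h ∈ Subgroup.map (MulAut.conj y⁻¹).toMonoidHom H :=
          Subgroup.mem_map_of_mem _ hh
        rw [hy'] at hmem
        simpa [MulAut.conj_apply] using hmem
      have hfix : Subgroup.map (MulAut.conj (y⁻¹ * h * y)).toMonoidHom (pCoreOf ℓ H) =
          pCoreOf ℓ H := mem_normalizer_iff_map.mp (le_normalizer_pCoreOf H hyh)
      have e : h * y = y * (y⁻¹ * h * y) := by group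
      rw [e, ← map_conj_map_conj, hfix]
    · exact (pCoreOf_isPGroup hℓ H).map _
  refine le_antisymm (key x hx) ?_
  have h2 := key x⁻¹ (map_conj_inv_eq hx)
  have h3 := Subgroup.map_mono (f := (MulAut.conj x).toMonoidHom) h2
  rwa [map_conj_map_conj, mul_inv_cancel, map_conj_one] at h3

end Helpers

section Quotient

variable {G : Type} [Group G] [Finite G] {ℓ : ℕ}
variable {Z : Subgroup G} [Z.Normal]

local notation "π" => QuotientGroup.mk' Z

theorem map_mk'_self : Subgroup.map π Z = ⊥ := by
  rw [eq_bot_iff]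
  rintro _ ⟨z, hz, rfl⟩
  simpa [Subgroup.mem_bot] using (QuotientGroup.eq_one_iff z).mpr hz

theorem map_mk'_conj (g : G) (R : Subgroup G) :
    Subgroup.map π (Subgroup.map (MulAut.conj g).toMonoidHom R) =
      Subgroup.map (MulAut.conj (π g)).toMonoidHom (Subgroup.map π R) := by
  rw [Subgroup.map_map, Subgroup.map_map]
  congr 1

theorem inf_Z_eq_bot (hℓ : ℓ.Prime) (hZℓ : ¬ ℓ ∣ Nat.card Z) {R : Subgroup G}
    (hp : IsPGroup ℓ ↥R) : R ⊓ Z = ⊥ := by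
  rw [eq_bot_iff]
  rintro x ⟨hxR, hxZ⟩
  obtain ⟨k, hk⟩ := hp ⟨x, hxR⟩
  have h1 : orderOf x ∣ ℓ ^ k := by
    apply orderOf_dvd_of_pow_eq_one
    have := congrArg (Subgroup.subtype R) hk
    simpa using this
  have h2 : orderOf x ∣ Nat.card Z := by
    rw [← Subgroup.orderOf_mk x hxZ]
    exact orderOf_dvd_natCard _
  have hcop : Nat.Coprime (ℓ ^ k) (Nat.card Z) :=
    Nat.Coprime.pow_left k ((Nat.Prime.coprime_iff_not_dvd hℓ).mpr hZℓ)
  have hone : orderOf x ∣ 1 := by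
    rw [← hcop]
    exact Nat.dvd_gcd h1 h2
  rw [Subgroup.mem_bot, ← orderOf_eq_one_iff]
  exact Nat.dvd_one.mp hone

theorem eq_of_le_of_map_eq (hℓ : ℓ.Prime) (hZℓ : ¬ ℓ ∣ Nat.card Z) {R S : Subgroup G}
    (hRS : R ≤ S) (hS : IsPGroup ℓ ↥S)
    (h : Subgroup.map π R = Subgroup.map π S) : R = S := by
  refine le_antisymm hRS fun s hs => ?_
  have hmem : π s ∈ Subgroup.map π R := h ▸ Subgroup.mem_map_of_mem _ hs
  obtain ⟨r, hr, hrs⟩ := hmem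
  have hz : r⁻¹ * s ∈ Z := by
    rw [← QuotientGroup.ker_mk' Z, MonoidHom.mem_ker, map_mul, map_inv, hrs, inv_mul_cancel]
  have hmem2 : r⁻¹ * s ∈ S ⊓ Z := ⟨S.mul_mem (S.inv_mem (hRS hr)) hs, hz⟩
  rw [inf_Z_eq_bot hℓ hZℓ hS, Subgroup.mem_bot, inv_mul_eq_one] at hmem2
  exact hmem2 ▸ hr

theorem sup_Z_le_normalizer (hZc : Z ≤ Subgroup.center G) (R : Subgroup G) :
    R ⊔ Z ≤ (Subgroup.normalizer (R : Set G)) :=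
  sup_le le_normalizer (hZc.trans (Subgroup.center_le_normalizer _))

theorem pCoreOf_sup_Z (hℓ : ℓ.Prime) (hZc : Z ≤ Subgroup.center G)
    (hZℓ : ¬ ℓ ∣ Nat.card Z) {R : Subgroup G} (hp : IsPGroup ℓ ↥R) :
    pCoreOf ℓ (R ⊔ Z) = R := by
  refine pCoreOf_eq hℓ le_sup_left (sup_Z_le_normalizer hZc R) hp ?_
  intro N hN hNnorm hNp
  have hmapN : Subgroup.map π N ≤ Subgroup.map π R := by
    calc Subgroup.map π N ≤ Subgroup.map π (R ⊔ Z) := Subgroup.map_mono hN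
      _ = Subgroup.map π R ⊔ Subgroup.map π Z := Subgroup.map_sup _ _ _
      _ = Subgroup.map π R := by rw [map_mk'_self, sup_bot_eq]
  have hRnorm : R ≤ (Subgroup.normalizer (N : Set G)) := fun r hr => hNnorm (Subgroup.mem_sup_left hr)
  have hsup : IsPGroup ℓ ↥(N ⊔ R) :=
    IsPGroup.to_sup_of_normal_left' hNp hp hRnorm
  have hmapeq : Subgroup.map π R = Subgroup.map π (N ⊔ R) := by
    rw [Subgroup.map_sup]
    exact (sup_eq_right.mpr hmapN).symm
  have heq := eq_of_le_of_map_eq hℓ hZℓ (le_sup_right : R ≤ N ⊔ R) hsup hmapeq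
  exact le_of_le_of_eq le_sup_left heq.symm

theorem normalizer_sup_Z (hℓ : ℓ.Prime) (hZc : Z ≤ Subgroup.center G)
    (hZℓ : ¬ ℓ ∣ Nat.card Z) {R : Subgroup G} (hp : IsPGroup ℓ ↥R) :
    (Subgroup.normalizer (((R ⊔ Z : Subgroup G)) : Set G)) = (Subgroup.normalizer (R : Set G)) := by
  apply le_antisymm
  · intro x hx
    have h := normalizer_le_normalizer_pCoreOf hℓ (R ⊔ Z) hx
    rwa [pCoreOf_sup_Z hℓ hZc hZℓ hp] at h
  · intro x hx
    rw [mem_normalizer_iff_map] at hx ⊢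
    have hZfix : Subgroup.map (MulAut.conj x).toMonoidHom Z = Z := by
      have hx2 : x ∈ (Subgroup.normalizer (Z : Set G)) := by
        rw [Subgroup.normalizer_eq_top_iff.mpr inferInstance]
        trivial
      exact mem_normalizer_iff_map.mp hx2
    rw [Subgroup.map_sup, hx, hZfix]

theorem normalizer_map_eq (hℓ : ℓ.Prime) (hZc : Z ≤ Subgroup.center G)
    (hZℓ : ¬ ℓ ∣ Nat.card Z) {R : Subgroup G} (hp : IsPGroup ℓ ↥R) :
    (Subgroup.normalizer ((Subgroup.map π R) : Set (G ⧸ Z))) = Subgroup.map π (Subgroup.normalizer (R : Set G)) := by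
  have hsurj : Function.Surjective π := QuotientGroup.mk'_surjective Z
  have h1 : Subgroup.comap π ((Subgroup.normalizer ((Subgroup.map π R) : Set (G ⧸ Z)))) = (Subgroup.normalizer (R : Set G)) := by
    rw [Subgroup.comap_normalizer_eq_of_surjective _ hsurj, Subgroup.comap_map_eq,
      QuotientGroup.ker_mk', normalizer_sup_Z hℓ hZc hZℓ hp]
  rw [← h1, Subgroup.map_comap_eq_self_of_surjective hsurj]

theorem map_pCoreOf (hℓ : ℓ.Prime) (hZc : Z ≤ Subgroup.center G)
    (hZℓ : ¬ ℓ ∣ Nat.card Z) {H : Subgroup G} (hZH : Z ≤ H) :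
    Subgroup.map π (pCoreOf ℓ H) = pCoreOf ℓ (Subgroup.map π H) := by
  haveI : Fact ℓ.Prime := ⟨hℓ⟩
  refine le_antisymm ?_ ?_
  · apply le_pCoreOf
    · exact Subgroup.map_mono (pCoreOf_le H)
    · calc Subgroup.map π H ≤ Subgroup.map π (Subgroup.normalizer ((pCoreOf ℓ H) : Set G)) :=
          Subgroup.map_mono (le_normalizer_pCoreOf H)
        _ ≤ (Subgroup.normalizer ((Subgroup.map π (pCoreOf ℓ H)) : Set (G ⧸ Z))) := Subgroup.le_normalizer_map _
    · exact (pCoreOf_isPGroup hℓ H).map _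
  · set Qb := pCoreOf ℓ (Subgroup.map π H) with hQbdef
    set Q := Subgroup.comap π Qb ⊓ H with hQdef
    have hZQ : Z ≤ Q := by
      refine le_inf (fun z hz => ?_) hZH
      rw [Subgroup.mem_comap]
      have hz1 : π z = 1 := (QuotientGroup.eq_one_iff z).mpr hz
      rw [hz1]
      exact one_mem _
    have hQH : Q ≤ H := by rw [hQdef]; exact inf_le_right
    have hmapQ : Subgroup.map π Q = Qb := by
      apply le_antisymm
      · rintro _ ⟨x, hx, rfl⟩
        exact ((Subgroup.mem_inf.mp (hQdef ▸ hx)).1 : _)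
      · intro qb hqb
        obtain ⟨h, hh, rfl⟩ := pCoreOf_le _ hqb
        refine ⟨h, ?_, rfl⟩
        show h ∈ Subgroup.comap π Qb ⊓ H
        exact Subgroup.mem_inf.mpr ⟨hqb, hh⟩
    -- Schur–Zassenhaus inside Q
    set φ : ↥Q →* G ⧸ Z := (QuotientGroup.mk' Z).comp Q.subtype with hφdef
    set N := Z.subgroupOf Q with hNdef
    have hcardN : Nat.card ↥N = Nat.card ↥Z :=
      Nat.card_congr (Subgroup.subgroupOfEquivOfLe hZQ).toEquiv
    have hkerφ : φ.ker = N := by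
      ext x
      rw [hNdef, Subgroup.mem_subgroupOf, MonoidHom.mem_ker, hφdef]
      simp [QuotientGroup.eq_one_iff]
    have hrangeφ : φ.range = Qb := by
      rw [hφdef, MonoidHom.range_comp, Subgroup.range_subtype, hmapQ]
    have hindexN : N.index = Nat.card ↥Qb := by
      rw [Subgroup.index_eq_card, ← hrangeφ, ← hkerφ]
      exact Nat.card_congr (QuotientGroup.quotientKerEquivRange φ).toEquiv
    obtain ⟨n, hn⟩ := (pCoreOf_isPGroup hℓ (Subgroup.map π H)).exists_card_eq
    have hn' : Nat.card ↥Qb = ℓ ^ n := hn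
    have hcop : Nat.Coprime (Nat.card ↥N) N.index := by
      rw [hcardN, hindexN, hn']
      exact (Nat.Coprime.pow_left n ((Nat.Prime.coprime_iff_not_dvd hℓ).mpr hZℓ)).symm
    obtain ⟨K, hK⟩ := Subgroup.exists_right_complement'_of_coprime hcop
    set L := Subgroup.map Q.subtype K with hLdef
    have hcardL : Nat.card ↥L = ℓ ^ n := by
      have e1 : Nat.card ↥L = Nat.card ↥K :=
        (Nat.card_congr (Subgroup.equivMapOfInjective K Q.subtype
          Subtype.coe_injective).toEquiv).symm
      rw [e1, ← hK.symm.index_eq_card, hindexN, hn']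
    have hLp : IsPGroup ℓ ↥L := IsPGroup.of_card hcardL
    have hLZ : L ⊔ Z = Q := by
      have h1 := congrArg (Subgroup.map Q.subtype) hK.sup_eq_top
      rw [Subgroup.map_sup, hNdef, Subgroup.subgroupOf_map_subtype, inf_eq_left.mpr hZQ] at h1
      have h2 : Subgroup.map Q.subtype ⊤ = Q :=
        (MonoidHom.range_eq_map Q.subtype).symm.trans (Subgroup.range_subtype Q)
      rw [h2] at h1
      rw [sup_comm]
      exact h1
    have hpcQ : pCoreOf ℓ Q = L := by
      rw [← hLZ]
      exact pCoreOf_sup_Z hℓ hZc hZℓ hLp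
    have hHnormQ : H ≤ (Subgroup.normalizer (Q : Set G)) := by
      intro h hh
      rw [Subgroup.mem_normalizer_iff]
      intro g
      have hπh : π h ∈ (Subgroup.normalizer (Qb : Set (G ⧸ Z))) := le_normalizer_pCoreOf _ (Subgroup.mem_map_of_mem _ hh)
      have hiff := Subgroup.mem_normalizer_iff.mp hπh (π g)
      have hπconj : π (h * g * h⁻¹) = π h * π g * (π h)⁻¹ := by
        rw [map_mul, map_mul, map_inv]
      rw [hQdef, Subgroup.mem_inf, Subgroup.mem_inf, Subgroup.mem_comap, Subgroup.mem_comap,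
        hπconj]
      constructor
      · rintro ⟨hg1, hg2⟩
        exact ⟨hiff.mp hg1, (Subgroup.mem_normalizer_iff.mp (le_normalizer hh) g).mp hg2⟩
      · rintro ⟨hg1, hg2⟩
        exact ⟨hiff.mpr hg1, (Subgroup.mem_normalizer_iff.mp (le_normalizer hh) g).mpr hg2⟩
    have hHnormL : H ≤ (Subgroup.normalizer (L : Set G)) := by
      intro h hh
      have h1 := normalizer_le_normalizer_pCoreOf hℓ Q (hHnormQ hh)
      rwa [hpcQ] at h1
    have hLH : L ≤ H := le_trans (Subgroup.map_subtype_le K) hQH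
    have hLcore : L ≤ pCoreOf ℓ H := le_pCoreOf hLH hHnormL hLp
    calc Qb = Subgroup.map π Q := hmapQ.symm
      _ = Subgroup.map π (L ⊔ Z) := by rw [hLZ]
      _ = Subgroup.map π L ⊔ Subgroup.map π Z := Subgroup.map_sup _ _ _
      _ = Subgroup.map π L := by rw [map_mk'_self, sup_bot_eq]
      _ ≤ Subgroup.map π (pCoreOf ℓ H) := Subgroup.map_mono hLcore

end Quotient

theorem statement0 (G : Type) [Group G] [Finite G] (ℓ : ℕ) (hℓ : ℓ.Prime)
    (Z : Subgroup G) [Z.Normal] (hZc : Z ≤ Subgroup.center G)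
    (hZℓ : ¬ ℓ ∣ Nat.card Z) :
    Set.BijOn (fun R : Subgroup G => Subgroup.map (QuotientGroup.mk' Z) R)
      {R : Subgroup G | IsRadicalSubgroup ℓ R}
      {Q : Subgroup (G ⧸ Z) | IsRadicalSubgroup ℓ Q} ∧
    Set.InvOn (fun Q : Subgroup (G ⧸ Z) => pCoreOf ℓ (Subgroup.comap (QuotientGroup.mk' Z) Q))
      (fun R : Subgroup G => Subgroup.map (QuotientGroup.mk' Z) R)
      {R : Subgroup G | IsRadicalSubgroup ℓ R}
      {Q : Subgroup (G ⧸ Z) | IsRadicalSubgroup ℓ Q} ∧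
    ∀ R₁ R₂ : Subgroup G, IsRadicalSubgroup ℓ R₁ → IsRadicalSubgroup ℓ R₂ →
      (SubgroupIsConj R₁ R₂ ↔
        SubgroupIsConj (Subgroup.map (QuotientGroup.mk' Z) R₁)
          (Subgroup.map (QuotientGroup.mk' Z) R₂)) := by
  haveI : Fact ℓ.Prime := ⟨hℓ⟩
  have hsurj : Function.Surjective (QuotientGroup.mk' Z) := QuotientGroup.mk'_surjective Z
  have hrad_p : ∀ R : Subgroup G, IsRadicalSubgroup ℓ R → IsPGroup ℓ ↥R := by
    intro R hR; rw [show R = _ from hR]; exact pCoreOf_isPGroup hℓ _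
  have hrad_p' : ∀ Q : Subgroup (G ⧸ Z), IsRadicalSubgroup ℓ Q → IsPGroup ℓ ↥Q := by
    intro Q hQ; rw [show Q = _ from hQ]; exact pCoreOf_isPGroup hℓ _
  have hZle_norm : ∀ R : Subgroup G, Z ≤ (Subgroup.normalizer (R : Set G)) :=
    fun R => hZc.trans (Subgroup.center_le_normalizer _)
  have hmapsTo : ∀ R : Subgroup G, IsRadicalSubgroup ℓ R →
      IsRadicalSubgroup ℓ (Subgroup.map (QuotientGroup.mk' Z) R) := by
    intro R hR
    have hp := hrad_p R hR
    unfold IsRadicalSubgroup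
    rw [normalizer_map_eq hℓ hZc hZℓ hp, ← map_pCoreOf hℓ hZc hZℓ (hZle_norm R), ← (show R = _ from hR)]
  have hleft : ∀ R : Subgroup G, IsRadicalSubgroup ℓ R →
      pCoreOf ℓ (Subgroup.comap (QuotientGroup.mk' Z)
        (Subgroup.map (QuotientGroup.mk' Z) R)) = R := by
    intro R hR
    rw [Subgroup.comap_map_eq, QuotientGroup.ker_mk']
    exact pCoreOf_sup_Z hℓ hZc hZℓ (hrad_p R hR)
  have hQfacts : ∀ Q : Subgroup (G ⧸ Z), IsRadicalSubgroup ℓ Q →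
      (Subgroup.map (QuotientGroup.mk' Z)
        (pCoreOf ℓ (Subgroup.comap (QuotientGroup.mk' Z) Q)) = Q ∧
       IsRadicalSubgroup ℓ (pCoreOf ℓ (Subgroup.comap (QuotientGroup.mk' Z) Q))) := by
    intro Q hQ
    have hQp := hrad_p' Q hQ
    have hZH : Z ≤ Subgroup.comap (QuotientGroup.mk' Z) Q := by
      intro z hz
      rw [Subgroup.mem_comap]
      have hz1 : (QuotientGroup.mk' Z) z = 1 := (QuotientGroup.eq_one_iff z).mpr hz
      rw [hz1]
      exact one_mem _
    have hmapR : Subgroup.map (QuotientGroup.mk' Z)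
        (pCoreOf ℓ (Subgroup.comap (QuotientGroup.mk' Z) Q)) = Q := by
      rw [map_pCoreOf hℓ hZc hZℓ hZH, Subgroup.map_comap_eq_self_of_surjective hsurj,
        pCoreOf_self hℓ hQp]
    refine ⟨hmapR, ?_⟩
    set R := pCoreOf ℓ (Subgroup.comap (QuotientGroup.mk' Z) Q) with hRdef
    have hRp : IsPGroup ℓ ↥R := pCoreOf_isPGroup hℓ _
    have hRZ : R ⊔ Z = Subgroup.comap (QuotientGroup.mk' Z) Q := by
      have h1 := congrArg (Subgroup.comap (QuotientGroup.mk' Z)) hmapR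
      rwa [Subgroup.comap_map_eq, QuotientGroup.ker_mk'] at h1
    have hnorm : (Subgroup.normalizer (R : Set G)) = Subgroup.comap (QuotientGroup.mk' Z) (Subgroup.normalizer (Q : Set (G ⧸ Z))) := by
      rw [← normalizer_sup_Z hℓ hZc hZℓ hRp, hRZ,
        Subgroup.comap_normalizer_eq_of_surjective _ hsurj]
    have hSmap : Subgroup.map (QuotientGroup.mk' Z) (pCoreOf ℓ (Subgroup.normalizer (R : Set G))) = Q := by
      have hZn : Z ≤ (Subgroup.normalizer (R : Set G)) := hZle_norm R
      rw [map_pCoreOf hℓ hZc hZℓ hZn, hnorm,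
        Subgroup.map_comap_eq_self_of_surjective hsurj, ← (show Q = _ from hQ)]
    have hRle : R ≤ pCoreOf ℓ (Subgroup.normalizer (R : Set G)) := le_pCoreOf le_normalizer le_rfl hRp
    have hSp : IsPGroup ℓ ↥(pCoreOf ℓ (Subgroup.normalizer (R : Set G))) := pCoreOf_isPGroup hℓ _
    exact eq_of_le_of_map_eq hℓ hZℓ hRle hSp (by rw [hmapR, hSmap])
  have hinv : Set.InvOn
      (fun Q : Subgroup (G ⧸ Z) => pCoreOf ℓ (Subgroup.comap (QuotientGroup.mk' Z) Q))
      (fun R : Subgroup G => Subgroup.map (QuotientGroup.mk' Z) R)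
      {R : Subgroup G | IsRadicalSubgroup ℓ R}
      {Q : Subgroup (G ⧸ Z) | IsRadicalSubgroup ℓ Q} :=
    ⟨fun R hR => hleft R hR, fun Q hQ => (hQfacts Q hQ).1⟩
  refine ⟨hinv.bijOn (fun R hR => hmapsTo R hR) (fun Q hQ => (hQfacts Q hQ).2), hinv, ?_⟩
  intro R₁ R₂ h1 h2
  constructor
  · rintro ⟨g, hg⟩
    refine ⟨(QuotientGroup.mk' Z) g, ?_⟩
    rw [← hg]
    exact (map_mk'_conj g R₁).symm
  · rintro ⟨gb, hgb⟩
    obtain ⟨g, rfl⟩ := hsurj gb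
    refine ⟨g, ?_⟩
    have hmapeq : Subgroup.map (QuotientGroup.mk' Z)
        (Subgroup.map (MulAut.conj g).toMonoidHom R₁) =
        Subgroup.map (QuotientGroup.mk' Z) R₂ := by
      rw [map_mk'_conj, hgb]
    have hp1 : IsPGroup ℓ ↥(Subgroup.map (MulAut.conj g).toMonoidHom R₁) :=
      (hrad_p R₁ h1).map _
    have hp2 := hrad_p R₂ h2
    have hsupeq : Subgroup.map (MulAut.conj g).toMonoidHom R₁ ⊔ Z = R₂ ⊔ Z := by
      have h3 := congrArg (Subgroup.comap (QuotientGroup.mk' Z)) hmapeq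
      rwa [Subgroup.comap_map_eq, Subgroup.comap_map_eq, QuotientGroup.ker_mk'] at h3
    have e1 : Subgroup.map (MulAut.conj g).toMonoidHom R₁ ≤ R₂ := by
      have h4 := le_pCoreOf (N := Subgroup.map (MulAut.conj g).toMonoidHom R₁)
        (H := R₂ ⊔ Z) ?_ ?_ hp1
      · rwa [pCoreOf_sup_Z hℓ hZc hZℓ hp2] at h4
      · rw [← hsupeq]; exact le_sup_left
      · rw [← hsupeq]; exact sup_Z_le_normalizer hZc _
    have e2 : R₂ ≤ Subgroup.map (MulAut.conj g).toMonoidHom R₁ := by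
      have h4 := le_pCoreOf (N := R₂)
        (H := Subgroup.map (MulAut.conj g).toMonoidHom R₁ ⊔ Z) ?_ ?_ hp2
      · rwa [pCoreOf_sup_Z hℓ hZc hZℓ hp1] at h4
      · rw [hsupeq]; exact le_sup_left
      · rw [hsupeq]; exact sup_Z_le_normalizer hZc _
    exact le_antisymm e1 e2
end

section
/- Let G be a finite group, ℓ a prime, and Z a central subgroup of G whose order is not divisible by ℓ; write Ḡ = G/Z and let π : G → Ḡ be the canonical projection. If R is an ℓ-radical subgroup of G, then the normalizer of π(R) in Ḡ equals the image π(N_G(R)) of the normalizer of R in G. -/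
lemma pCore_isPGroup' (p : ℕ) (G : Type) [Group G] [Finite G] :
    IsPGroup p ↥(sSup {N : Subgroup G | N.Normal ∧ IsPGroup p ↥N}) := by
  have hfin : {N : Subgroup G | N.Normal ∧ IsPGroup p ↥N}.Finite := Set.toFinite _
  rw [← hfin.coe_toFinset, ← Finset.sup_id_eq_sSup]
  have := Finset.sup_induction (s := hfin.toFinset) (f := id)
    (p := fun N : Subgroup G => N.Normal ∧ IsPGroup p ↥N)
    ⟨inferInstance, IsPGroup.of_bot⟩
    (fun a ha b hb => by
      have : a.Normal := ha.1
      have : b.Normal := hb.1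
      exact ⟨Subgroup.sup_normal a b, IsPGroup.to_sup_of_normal_right ha.2 hb.2⟩)
    (fun N hN => (hfin.mem_toFinset.mp hN))
  exact this.2

theorem statement1' (G : Type) [Group G] [Finite G] (ℓ : ℕ) (hℓ : ℓ.Prime)
    (Z : Subgroup G) [Z.Normal] (hZc : Z ≤ Subgroup.center G)
    (hZℓ : ¬ ℓ ∣ Nat.card Z) (R : Subgroup G)
    (hR : R = Subgroup.map (Subgroup.normalizer (R : Set G)).subtype
      (sSup {N : Subgroup ↥(Subgroup.normalizer (R : Set G)) | N.Normal ∧ IsPGroup ℓ ↥N})) :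
    Subgroup.normalizer ((Subgroup.map (QuotientGroup.mk' Z) R : Subgroup (G ⧸ Z)) : Set (G ⧸ Z))
      = Subgroup.map (QuotientGroup.mk' Z) (Subgroup.normalizer (R : Set G)) := by
  set π := QuotientGroup.mk' Z with hπ
  have hRp : IsPGroup ℓ ↥R := by
    rw [hR]
    exact (pCore_isPGroup' ℓ ↥(Subgroup.normalizer (R : Set G))).map (Subgroup.normalizer (R : Set G)).subtype
  -- key claim
  have key : ∀ g : G, π g ∈ (Subgroup.normalizer ((Subgroup.map π R : Subgroup (G ⧸ Z)) : Set (G ⧸ Z))) →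
      ∀ r ∈ R, g * r * g⁻¹ ∈ R := by
    intro g hg r hr
    have h1 : π (g * r * g⁻¹) ∈ Subgroup.map π R := by
      have := (Subgroup.mem_normalizer_iff.mp hg (π r)).mp
        (Subgroup.mem_map_of_mem π hr)
      simpa [map_mul] using this
    obtain ⟨r', hr', heq⟩ := h1
    -- z := g r g⁻¹ r'⁻¹ ∈ Z
    have hz : g * r * g⁻¹ * r'⁻¹ ∈ Z := by
      have : π (g * r * g⁻¹ * r'⁻¹) = 1 := by
        rw [map_mul, ← heq, map_inv, mul_inv_cancel]
      rwa [← QuotientGroup.ker_mk' Z, MonoidHom.mem_ker]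
    set z := g * r * g⁻¹ * r'⁻¹ with hzdef
    have hzc : ∀ y : G, z * y = y * z := fun y =>
      (Subgroup.mem_center_iff.mp (hZc hz) y).symm
    obtain ⟨k, hk⟩ := hRp ⟨r, hr⟩
    obtain ⟨m, hm⟩ := hRp ⟨r', hr'⟩
    have hk' : r ^ (ℓ ^ k) = 1 := by
      have := congrArg (Subgroup.subtype R) hk; simpa using this
    have hm' : r' ^ (ℓ ^ m) = 1 := by
      have := congrArg (Subgroup.subtype R) hm; simpa using this
    have hconj : (g * r * g⁻¹) ^ (ℓ ^ k) = 1 := by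
      rw [conj_pow, hk', mul_one, mul_inv_cancel]
    have hzr : g * r * g⁻¹ = z * r' := by
      rw [hzdef]; simp [mul_assoc]
    have hcomm : Commute z r' := hzc r'
    have hzk : z ^ (ℓ ^ k) * r' ^ (ℓ ^ k) = 1 := by
      rw [← hcomm.mul_pow, ← hzr, hconj]
    have hzpow : z ^ (ℓ ^ (k + m)) = 1 := by
      have : z ^ (ℓ ^ k) = (r' ^ (ℓ ^ k))⁻¹ := eq_inv_of_mul_eq_one_left hzk
      calc z ^ (ℓ ^ (k + m)) = (z ^ (ℓ ^ k)) ^ (ℓ ^ m) := by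
            rw [← pow_mul, pow_add]
        _ = ((r' ^ (ℓ ^ m)) ^ (ℓ ^ k))⁻¹ := by
            rw [this, ← inv_pow, ← pow_mul, ← pow_mul, Nat.mul_comm, inv_pow]
        _ = 1 := by rw [hm', one_pow, inv_one]
    have hz1 : z = 1 := by
      have hd1 : orderOf z ∣ ℓ ^ (k + m) := orderOf_dvd_of_pow_eq_one hzpow
      have hd2 : orderOf z ∣ Nat.card Z := by
        have h := orderOf_dvd_natCard (⟨z, hz⟩ : Z)
        rw [← orderOf_injective Z.subtype Subtype.coe_injective ⟨z, hz⟩] at h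
        exact h
      have hcop : Nat.Coprime (ℓ ^ (k + m)) (Nat.card Z) :=
        Nat.Coprime.pow_left _ ((Nat.Prime.coprime_iff_not_dvd hℓ).mpr hZℓ)
      have : orderOf z ∣ 1 := Nat.dvd_gcd hd1 hd2 |>.trans hcop.gcd_eq_one.dvd
      exact orderOf_eq_one_iff.mp (Nat.dvd_one.mp this)
    have : g * r * g⁻¹ = r' := by
      rw [hzr, hz1, one_mul]
    rw [this]; exact hr'
  apply le_antisymm
  · intro x hx
    obtain ⟨g, rfl⟩ := QuotientGroup.mk'_surjective Z x
    have hg1 := key g hx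
    have hg2 := key g⁻¹ (by simpa only [map_inv] using (Subgroup.normalizer ((Subgroup.map π R : Subgroup (G ⧸ Z)) : Set (G ⧸ Z))).inv_mem hx)
    refine ⟨g, Subgroup.mem_normalizer_iff.mpr fun h => ⟨fun hh => hg1 h hh, fun hh => ?_⟩, rfl⟩
    have := hg2 _ hh
    simpa [mul_assoc] using this
  · rintro x ⟨g, hg, rfl⟩
    refine Subgroup.mem_normalizer_iff.mpr fun n => ⟨?_, ?_⟩
    · rintro ⟨r, hr, rfl⟩
      refine ⟨g * r * g⁻¹, (Subgroup.mem_normalizer_iff.mp hg r).mp hr, by simp [map_mul]⟩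
    · rintro hcn
      obtain ⟨y, rfl⟩ := QuotientGroup.mk'_surjective Z n
      obtain ⟨r', hr', heq⟩ := hcn
      have hmem : g⁻¹ * r' * g ∈ R :=
        (Subgroup.mem_normalizer_iff.mp hg (g⁻¹ * r' * g)).mpr
          (by simpa [mul_assoc] using hr')
      refine ⟨g⁻¹ * r' * g, hmem, ?_⟩
      have h2 : π r' = π g * π y * (π g)⁻¹ := by exact heq
      rw [map_mul, map_mul, map_inv, h2]
      group
      rfl

theorem statement1 (G : Type) [Group G] [Finite G] (ℓ : ℕ) (hℓ : ℓ.Prime)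
    (Z : Subgroup G) [Z.Normal] (hZc : Z ≤ Subgroup.center G)
    (hZℓ : ¬ ℓ ∣ Nat.card Z) (R : Subgroup G) (hR : IsRadicalSubgroup ℓ R) :
    Subgroup.normalizer ((Subgroup.map (QuotientGroup.mk' Z) R : Subgroup (G ⧸ Z)) : Set (G ⧸ Z))
      = Subgroup.map (QuotientGroup.mk' Z) (Subgroup.normalizer (R : Set G)) := by
  exact statement1' G ℓ hℓ Z hZc hZℓ R hR
end

section
/- Let G be a finite group, ℓ a prime, and Z a central subgroup of G whose order is not divisible by ℓ; write Ḡ = G/Z with canonical projection π. If (R̄, φ̄) is an ℓ-weight of Ḡ, then (R, φ) is an ℓ-weight of G, where R = O_ℓ(π⁻¹(R̄)) and φ is the inflation of φ̄ to N_G(R), i.e. φ(g) = φ̄(π(g)) for g ∈ N_G(R) (this is well defined since π(N_G(R)) = N_{Ḡ}(R̄)). -/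
open scoped Classical

/-- `χ : G → ℂ` is an irreducible (complex) character of `G`: it is the character of some
simple finite-dimensional complex representation of `G`. -/
def IsIrrChar (G : Type) [Monoid G] (χ : G → ℂ) : Prop :=
  ∃ V : FDRep ℂ G, CategoryTheory.Simple V ∧ ∀ g : G, χ g = FDRep.character V g

/-- The usual inner product of class functions on a finite group `L`. -/
noncomputable def charInner (L : Type) (α β : L → ℂ) : ℂ :=
  (Nat.card L : ℂ)⁻¹ * ∑ᶠ l : L, α l * (starRingEnd ℂ) (β l)

/-- Restriction of a character of a subgroup `B` of `H` to a smaller subgroup `A ≤ B`. -/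
def restrictChar {H : Type} [Group H] {A B : Subgroup H} (h : A ≤ B) (χ : ↥B → ℂ) :
    ↥A → ℂ :=
  fun a => χ ⟨↑a, h a.2⟩

/-- A character `χ` of `H` lies over a character `θ` of a subgroup `A ≤ H` if `θ` is a
constituent of the restriction of `χ` to `A`. -/
def liesOver {H : Type} [Group H] (A : Subgroup H) (χ : H → ℂ) (θ : ↥A → ℂ) : Prop :=
  charInner ↥A (fun a : ↥A => χ ↑a) θ ≠ 0

/-- `(R, φ)` is an `ℓ`-weight of `G`: `R` is an `ℓ`-subgroup of `G` and `φ` is an irreducible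
complex character of `N_G(R)` whose kernel contains `R` and which has `ℓ`-defect zero viewed as
a character of `N_G(R)/R`, i.e. `|N_G(R)/R|/φ(1)` is not divisible by `ℓ`. -/
def IsWeight (ℓ : ℕ) {G : Type} [Group G] (R : Subgroup G) (φ : ↥(Subgroup.normalizer (R : Set G)) → ℂ) : Prop :=
  IsPGroup ℓ ↥R ∧ IsIrrChar ↥(Subgroup.normalizer (R : Set G)) φ ∧
  (∀ (r : G) (hr : r ∈ R), φ ⟨r, Subgroup.le_normalizer hr⟩ = φ 1) ∧
  ∃ d m : ℕ, ¬ ℓ ∣ m ∧ φ 1 = (d : ℂ) ∧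
    Nat.card ↥(Subgroup.normalizer (R : Set G)) = m * d * Nat.card ↥R

/-- The stabilizer (as a set) of a character `φ` of a normal subgroup `L` of `H` under the
conjugation action of `H` on `Irr(L)`. -/
def charStab {H : Type} [Group H] (L : Subgroup H) (φ : ↥L → ℂ) : Set H :=
  {h : H | ∀ (l : ↥L) (hl : h * ↑l * h⁻¹ ∈ L), φ ⟨h * ↑l * h⁻¹, hl⟩ = φ l}

/-- The character of `M` induced from a character `ψ` of a subgroup `U ≤ M`. -/
noncomputable def inducedChar {M : Type} [Group M] (U : Subgroup M) (ψ : ↥U → ℂ) : M → ℂ :=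
  fun g => (Nat.card ↥U : ℂ)⁻¹ *
    ∑ᶠ x : M, if h : x * g * x⁻¹ ∈ U then ψ ⟨x * g * x⁻¹, h⟩ else 0

section AuxSimple

open CategoryTheory Function

/-- Restriction of a representation to an invariant submodule. -/
def auxSubRep {M : Type} [Monoid M] {V : Type} [AddCommGroup V] [Module ℂ V]
    (ρ : Representation ℂ M V) (p : Submodule ℂ V) (hp : ∀ g, ∀ x ∈ p, ρ g x ∈ p) :
    Representation ℂ M ↥p where
  toFun g := (ρ g).restrict (hp g)
  map_one' := by ext x; simp [LinearMap.restrict_apply]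
  map_mul' g h := by ext x; simp [LinearMap.restrict_apply]

lemma auxCommApply {M : Type} [Monoid M] {X Y : FDRep ℂ M} (f : Y ⟶ X) (g : M) (y : Y) :
    f.hom.hom.hom (Y.ρ g y) = X.ρ g (f.hom.hom.hom y) :=
  congrArg (fun h => h.hom.hom y) (f.comm g)

lemma auxSimpleIff {M : Type} [Monoid M] (X : FDRep ℂ M) :
    Simple X ↔ (Nontrivial X ∧
      ∀ p : Submodule ℂ X, (∀ g, ∀ x ∈ p, X.ρ g x ∈ p) → p = ⊥ ∨ p = ⊤) := by
  constructor
  · intro hX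
    constructor
    · by_contra h
      rw [not_nontrivial_iff_subsingleton] at h
      apply CategoryTheory.id_nonzero X
      apply Action.hom_ext
      ext x
      exact @Subsingleton.elim _ h _ _
    · intro p hp
      by_cases hb : p = ⊥
      · exact Or.inl hb
      right
      let ι : FDRep.of (auxSubRep X.ρ p hp) ⟶ X :=
        ⟨FGModuleCat.ofHom p.subtype, fun g => rfl⟩
      have hmono : Mono ι := by
        constructor
        intro W a b hab
        apply Action.hom_ext
        ext x
        exact DFunLike.congr_fun (congrArg (fun h => h.hom.hom.hom) hab) x
      have hne : ι ≠ 0 := by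
        obtain ⟨x, hx, hx0⟩ := (Submodule.ne_bot_iff p).mp hb
        intro h0
        apply hx0
        have : ι.hom.hom.hom ⟨x, hx⟩ = (0 : FDRep.of (auxSubRep X.ρ p hp) ⟶ X).hom.hom.hom ⟨x, hx⟩ := by rw [h0]
        simp at this; exact this
      have hiso : IsIso ι := isIso_of_mono_of_nonzero hne
      rw [eq_top_iff]
      intro x _
      have h1 : ι.hom.hom.hom ((inv ι).hom.hom.hom x) = x :=
        DFunLike.congr_fun (congrArg (fun h => h.hom.hom.hom) (IsIso.inv_hom_id ι)) x
      rw [← h1]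
      exact ((inv ι).hom.hom.hom x).2
  · rintro ⟨hnt, hmax⟩
    constructor
    intro Y f hm
    constructor
    · intro hiso h0
      obtain ⟨a, b, hab⟩ := hnt
      apply hab
      have hid : (𝟙 X : X ⟶ X) = 0 := by
        obtain ⟨g', _, hg2⟩ := hiso.out
        rw [h0] at hg2
        rw [← hg2]
        exact Limits.comp_zero
      have ha := DFunLike.congr_fun (congrArg (fun h => h.hom.hom.hom) hid) a
      have hb := DFunLike.congr_fun (congrArg (fun h => h.hom.hom.hom) hid) b
      simp only [Action.id_hom, Action.zero_hom] at ha hb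
      calc a = (0 : X →ₗ[ℂ] X) a := ha
        _ = (0 : X →ₗ[ℂ] X) b := rfl
        _ = b := hb.symm
    · intro hf0
      -- f.hom is injective, via Mono and the kernel subrepresentation of Y
      have hinj : Injective f.hom.hom.hom := by
        rw [← LinearMap.ker_eq_bot]
        by_contra hk
        have hkinv : ∀ g, ∀ y ∈ LinearMap.ker f.hom.hom.hom, Y.ρ g y ∈ LinearMap.ker f.hom.hom.hom := by
          intro g y hy
          rw [LinearMap.mem_ker] at hy ⊢
          refine (auxCommApply f g y).trans ?_
          rw [hy, map_zero]
        let κ : FDRep.of (auxSubRep Y.ρ (LinearMap.ker f.hom.hom.hom) hkinv) ⟶ Y :=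
          ⟨FGModuleCat.ofHom (LinearMap.ker f.hom.hom.hom).subtype, fun g => rfl⟩
        have hcomp : κ ≫ f = 0 := by
          apply Action.hom_ext
          ext ⟨y, hy⟩
          have : f.hom.hom.hom y = 0 := hy
          exact this
        have hzero : κ = 0 :=
          hm.right_cancellation κ 0 (by rw [hcomp]; simp)
        obtain ⟨y, hy, hy0⟩ := (Submodule.ne_bot_iff _).mp hk
        apply hy0
        have : κ.hom.hom.hom ⟨y, hy⟩ =
            (0 : FDRep.of (auxSubRep Y.ρ (LinearMap.ker f.hom.hom.hom) hkinv) ⟶ Y).hom.hom.hom ⟨y, hy⟩ := by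
          rw [hzero]
        simp at this; exact this
      have hsurj : Surjective f.hom.hom.hom := by
        have hrinv : ∀ g, ∀ x ∈ LinearMap.range f.hom.hom.hom, X.ρ g x ∈ LinearMap.range f.hom.hom.hom := by
          rintro g x ⟨y, rfl⟩
          exact ⟨Y.ρ g y, auxCommApply f g y⟩
        rcases hmax (LinearMap.range f.hom.hom.hom) hrinv with h | h
        · exfalso
          apply hf0
          apply Action.hom_ext
          ext y
          have hmem : f.hom.hom.hom y ∈ LinearMap.range f.hom.hom.hom := ⟨y, rfl⟩
          rw [h, Submodule.mem_bot] at hmem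
          simpa using hmem
        · rw [← LinearMap.range_eq_top]
          exact h
      let e : (Y : Type) ≃ₗ[ℂ] (X : Type) := LinearEquiv.ofBijective f.hom.hom.hom ⟨hinj, hsurj⟩
      let ginv : X ⟶ Y := ⟨FGModuleCat.ofHom (e.symm : (X : Type) →ₗ[ℂ] (Y : Type)), fun g => by
        ext x
        apply hinj
        show f.hom.hom.hom (e.symm ((X.ρ g) x)) = f.hom.hom.hom ((Y.ρ g) (e.symm x))
        rw [auxCommApply f g (e.symm x)]
        have h1 : f.hom.hom.hom (e.symm (X.ρ g x)) = X.ρ g x := e.apply_symm_apply _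
        have h2 : f.hom.hom.hom (e.symm x) = x := e.apply_symm_apply _
        rw [h1, h2]⟩
      refine ⟨⟨ginv, ?_, ?_⟩⟩
      · apply Action.hom_ext
        ext y
        show e.symm (f.hom.hom.hom y) = y
        exact e.symm_apply_apply y
      · apply Action.hom_ext
        ext x
        show f.hom.hom.hom (e.symm x) = x
        exact e.apply_symm_apply x

lemma auxCharComp {M N : Type} [Monoid M] [Monoid N] (q : M →* N) (W : FDRep ℂ N) (g : M) :
    FDRep.character (FDRep.of (W.ρ.comp q)) g = FDRep.character W (q g) := rfl

lemma auxSimpleComp {M N : Type} [Monoid M] [Monoid N] (q : M →* N) (hq : Surjective q)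
    (W : FDRep ℂ N) (hW : Simple W) : Simple (FDRep.of (W.ρ.comp q)) := by
  rw [auxSimpleIff] at hW ⊢
  refine ⟨hW.1, fun p hp => hW.2 p fun n x hx => ?_⟩
  obtain ⟨g, rfl⟩ := hq n
  exact hp g x hx

end AuxSimple


set_option maxHeartbeats 1000000 in
theorem statement4 (G : Type) [Group G] [Finite G] (ℓ : ℕ) (hℓ : ℓ.Prime)
    (Z : Subgroup G) [Z.Normal] (hZc : Z ≤ Subgroup.center G)
    (hZℓ : ¬ ℓ ∣ Nat.card Z)
    (Rbar : Subgroup (G ⧸ Z)) (φbar : ↥(Subgroup.normalizer (Rbar : Set (G ⧸ Z))) → ℂ)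
    (hw : IsWeight ℓ Rbar φbar)
    (R : Subgroup G) (hR : R = pCoreOf ℓ (Subgroup.comap (QuotientGroup.mk' Z) Rbar))
    (φ : ↥(Subgroup.normalizer (R : Set G)) → ℂ)
    (hφ : ∀ (n : ↥(Subgroup.normalizer (R : Set G))) (h : QuotientGroup.mk' Z ↑n ∈ (Subgroup.normalizer (Rbar : Set (G ⧸ Z)))),
      φ n = φbar ⟨QuotientGroup.mk' Z ↑n, h⟩) :
    IsWeight ℓ R φ := by
  classical
  haveI : Fact ℓ.Prime := ⟨hℓ⟩
  set π := QuotientGroup.mk' Z with hπdef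
  have hπs : Function.Surjective π := QuotientGroup.mk'_surjective Z
  have hπker : ∀ g : G, π g = 1 ↔ g ∈ Z := by
    intro g
    simp [hπdef, QuotientGroup.mk'_apply, QuotientGroup.eq_one_iff]
  have cardLemma : ∀ (K : Subgroup G) (B : Subgroup (G ⧸ Z)),
      (∀ x : G, x ∈ K ↔ π x ∈ B) →
      Nat.card ↥K = Nat.card ↥B * Nat.card ↥Z := by
    intro K B hc
    have hZK : Z ≤ K := fun z hz => (hc z).mpr (by rw [(hπker z).mpr hz]; exact B.one_mem)
    let f : ↥K →* ↥B := (π.comp K.subtype).codRestrict B (fun x => (hc x).mp x.2)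
    have hfs : Function.Surjective f := by
      rintro ⟨b, hb⟩
      obtain ⟨g, rfl⟩ := hπs b
      exact ⟨⟨g, (hc g).mpr hb⟩, rfl⟩
    have hker : f.ker = Z.subgroupOf K := by
      ext x
      simp only [MonoidHom.mem_ker, Subgroup.mem_subgroupOf]
      constructor
      · intro hx
        exact (hπker _).mp (congrArg Subtype.val hx)
      · intro hx
        exact Subtype.ext ((hπker _).mpr hx)
    have e1 : Nat.card ↥K = Nat.card (↥K ⧸ f.ker) * Nat.card ↥f.ker :=
      Subgroup.card_eq_card_quotient_mul_card_subgroup f.ker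
    have e2 : Nat.card (↥K ⧸ f.ker) = Nat.card ↥B :=
      Nat.card_congr (QuotientGroup.quotientKerEquivOfSurjective f hfs).toEquiv
    have e3 : Nat.card ↥f.ker = Nat.card ↥Z := by
      rw [hker]
      exact Nat.card_congr (Subgroup.subgroupOfEquivOfLe hZK).toEquiv
    rw [e1, e2, e3]
  set H := Subgroup.comap π Rbar with hHdef
  have hHmem : ∀ x : G, x ∈ H ↔ π x ∈ Rbar := fun x => Iff.rfl
  have hnil : Group.IsNilpotent ↥H := by
    let f : ↥H →* ↥Rbar := (π.comp H.subtype).codRestrict Rbar (fun x => x.2)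
    haveI : Group.IsNilpotent ↥Rbar := (hw.1).isNilpotent
    apply isNilpotent_of_ker_le_center f
    · intro x hx
      rw [Subgroup.mem_center_iff]
      intro h
      apply Subtype.ext
      have hxZ : (x : G) ∈ Z := (hπker _).mp (congrArg Subtype.val hx)
      exact (Subgroup.mem_center_iff.mp (hZc hxZ)) ↑h
  obtain ⟨P⟩ : Nonempty (Sylow ℓ ↥H) := inferInstance
  have hPnormal : (P : Subgroup ↥H).Normal :=
    ((isNilpotent_of_finite_tfae (G := ↥H)).out 0 3 rfl rfl).mp hnil ℓ ⟨hℓ⟩ P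
  haveI := Sylow.unique_of_normal P hPnormal
  have hPcore : pCore ℓ ↥H = ↑P := by
    apply le_antisymm
    · apply sSup_le
      rintro N ⟨hNn, hNp⟩
      obtain ⟨Q, hQ⟩ := hNp.exists_le_sylow
      rwa [Subsingleton.elim Q P] at hQ
    · exact le_sSup ⟨hPnormal, P.isPGroup'⟩
  have hRP : R = Subgroup.map H.subtype ↑P := by
    rw [hR]
    unfold pCoreOf
    rw [hPcore]
  have hRp : IsPGroup ℓ ↥R := by rw [hRP]; exact P.isPGroup'.map _
  have hRH : R ≤ H := by rw [hRP]; exact Subgroup.map_subtype_le _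
  have hRZ1 : ∀ r : G, r ∈ R → r ∈ Z → r = 1 := by
    intro r hr hz
    obtain ⟨n, hn⟩ := hRp ⟨r, hr⟩
    have h1 : r ^ ℓ ^ n = 1 := by
      have := congrArg Subtype.val hn
      simpa using this
    have h2 : orderOf r ∣ ℓ ^ n := orderOf_dvd_of_pow_eq_one h1
    have h3 : orderOf r ∣ Nat.card ↥Z := Subgroup.orderOf_dvd_natCard Z hz
    have hcop : Nat.Coprime (ℓ ^ n) (Nat.card ↥Z) :=
      Nat.Coprime.pow_left n ((Nat.Prime.coprime_iff_not_dvd hℓ).mpr hZℓ)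
    have h4 : orderOf r ∣ 1 := hcop ▸ Nat.dvd_gcd h2 h3
    exact orderOf_eq_one_iff.mp (Nat.dvd_one.mp h4)
  obtain ⟨kk, hkk⟩ := IsPGroup.iff_card.mp hw.1
  have hcardH : Nat.card ↥H = Nat.card ↥Rbar * Nat.card ↥Z := cardLemma H Rbar hHmem
  have hZpos : Nat.card ↥Z ≠ 0 := Nat.card_pos.ne'
  have hfact : (Nat.card ↥H).factorization ℓ = kk := by
    rw [hcardH, hkk, Nat.factorization_mul (pow_ne_zero _ hℓ.pos.ne') hZpos]
    simp [hℓ.factorization_pow, Nat.factorization_eq_zero_of_not_dvd hZℓ]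
  have hcardP : Nat.card ↥(P : Subgroup ↥H) = Nat.card ↥Rbar := by
    have hc := Sylow.card_eq_multiplicity P
    rw [hfact] at hc
    rw [hkk]
    exact hc
  have hcardR : Nat.card ↥R = Nat.card ↥Rbar := by
    have e := Subgroup.equivMapOfInjective ((P : Subgroup ↥H)) H.subtype
      (Subgroup.subtype_injective H)
    rw [hRP, ← hcardP]
    exact (Nat.card_congr e.toEquiv).symm
  have hπRsurj : ∀ b, b ∈ Rbar → ∃ r, r ∈ R ∧ π r = b := by
    let fR : ↥R →* ↥Rbar := (π.comp R.subtype).codRestrict Rbar (fun x => (hHmem x).mp (hRH x.2))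
    have hinj : Function.Injective fR := by
      rw [injective_iff_map_eq_one]
      intro a ha
      have : π ↑a = 1 := congrArg Subtype.val ha
      exact Subtype.ext (hRZ1 a a.2 ((hπker _).mp this))
    have hbij : Function.Bijective fR :=
      (Nat.bijective_iff_injective_and_card fR).mpr ⟨hinj, by rw [hcardR]⟩
    intro b hb
    obtain ⟨r, hr⟩ := hbij.2 ⟨b, hb⟩
    exact ⟨↑r, r.2, congrArg Subtype.val hr⟩
  have hL : ∀ Q : Subgroup G, IsPGroup ℓ ↥Q → Q ≤ H → Q ≤ R := by
    intro Q hQ hQH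
    have hQ' : IsPGroup ℓ ↥(Q.subgroupOf H) := hQ.comap_subtype
    obtain ⟨Q2, hQ2⟩ := hQ'.exists_le_sylow
    rw [Subsingleton.elim Q2 P] at hQ2
    have hmap : (Q.subgroupOf H).map H.subtype ≤ (P : Subgroup ↥H).map H.subtype :=
      Subgroup.map_mono hQ2
    rwa [Subgroup.subgroupOf_map_subtype, inf_of_le_left hQH, ← hRP] at hmap
  have hNiff : ∀ n : G, n ∈ (Subgroup.normalizer (R : Set G)) ↔ π n ∈ (Subgroup.normalizer (Rbar : Set (G ⧸ Z))) := by
    intro n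
    constructor
    · intro hn
      rw [Subgroup.mem_normalizer_iff]
      intro b
      constructor
      · intro hb
        obtain ⟨r, hrR, rfl⟩ := hπRsurj b hb
        have hr' : n * r * n⁻¹ ∈ R := (Subgroup.mem_normalizer_iff.mp hn r).mp hrR
        have : π (n * r * n⁻¹) ∈ Rbar := (hHmem _).mp (hRH hr')
        simpa [map_mul, map_inv] using this
      · intro hb
        obtain ⟨r, hrR, hr⟩ := hπRsurj _ hb
        have hg : n⁻¹ * r * n ∈ R := by
          apply (Subgroup.mem_normalizer_iff.mp hn (n⁻¹ * r * n)).mpr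
          have : n * (n⁻¹ * r * n) * n⁻¹ = r := by group
          rwa [this]
        have hmem : π (n⁻¹ * r * n) ∈ Rbar := (hHmem _).mp (hRH hg)
        have hb' : π (n⁻¹ * r * n) = b := by
          rw [map_mul, map_mul, map_inv, hr]
          group
        rwa [hb'] at hmem
    · intro hn
      have key : ∀ m : G, π m ∈ (Subgroup.normalizer (Rbar : Set (G ⧸ Z))) → ∀ x ∈ R, m * x * m⁻¹ ∈ R := by
        intro m hm x hx
        have hconj : Subgroup.map (MulAut.conj m).toMonoidHom R ≤ R := by
          apply hL
          · exact hRp.map _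
          · rintro y ⟨x', hx', rfl⟩
            have hx'H : π x' ∈ Rbar := (hHmem _).mp (hRH hx')
            show ((MulAut.conj m).toMonoidHom x' : G) ∈ H
            rw [hHmem]
            have heq : π ((MulAut.conj m).toMonoidHom x') = π m * π x' * (π m)⁻¹ := by
              show π (m * x' * m⁻¹) = _
              rw [map_mul, map_mul, map_inv]
            rw [heq]
            exact (Subgroup.mem_normalizer_iff.mp hm (π x')).mp hx'H
        exact hconj ⟨x, hx, rfl⟩
      rw [Subgroup.mem_normalizer_iff]
      intro x
      constructor
      · exact fun hx => key n hn x hx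
      · intro hx
        have h2 := key n⁻¹ (by rw [map_inv]; exact (Subgroup.normalizer (Rbar : Set (G ⧸ Z))).inv_mem hn) _ hx
        have h3 : n⁻¹ * (n * x * n⁻¹) * n⁻¹⁻¹ = x := by group
        rwa [h3] at h2
  have hcardN : Nat.card ↥(Subgroup.normalizer (R : Set G)) = Nat.card ↥(Subgroup.normalizer (Rbar : Set (G ⧸ Z))) * Nat.card ↥Z :=
    cardLemma _ _ hNiff
  let q : ↥(Subgroup.normalizer (R : Set G)) →* ↥(Subgroup.normalizer (Rbar : Set (G ⧸ Z))) :=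
    (π.comp (Subgroup.normalizer (R : Set G)).subtype).codRestrict (Subgroup.normalizer (Rbar : Set (G ⧸ Z))) (fun x => (hNiff x).mp x.2)
  have hqs : Function.Surjective q := by
    rintro ⟨b, hb⟩
    obtain ⟨g, rfl⟩ := hπs b
    exact ⟨⟨g, (hNiff g).mpr hb⟩, rfl⟩
  obtain ⟨hwP, ⟨Vb, hVbS, hVbchar⟩, hwTriv, d, mb, hmb, hd1, hcardNb⟩ := hw
  have hone : π ((1 : ↥(Subgroup.normalizer (R : Set G))) : G) ∈ (Subgroup.normalizer (Rbar : Set (G ⧸ Z))) := by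
    have : π ((1 : ↥(Subgroup.normalizer (R : Set G))) : G) = 1 := by simp
    rw [this]
    exact Subgroup.one_mem _
  have honeeq : (⟨π ((1 : ↥(Subgroup.normalizer (R : Set G))) : G), hone⟩ : ↥(Subgroup.normalizer (Rbar : Set (G ⧸ Z)))) = 1 :=
    Subtype.ext (by simp)
  have hφ1 : φ 1 = φbar 1 := by
    rw [hφ 1 hone, honeeq]
  refine ⟨hRp, ?_, ?_, d, Nat.card ↥Z * mb, ?_, ?_, ?_⟩
  · refine ⟨FDRep.of (Vb.ρ.comp q), auxSimpleComp q hqs Vb hVbS, ?_⟩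
    intro g
    have hg : π ↑g ∈ (Subgroup.normalizer (Rbar : Set (G ⧸ Z))) := (hNiff g).mp g.2
    rw [hφ g hg]
    have hqg : (⟨π ↑g, hg⟩ : ↥(Subgroup.normalizer (Rbar : Set (G ⧸ Z)))) = q g := rfl
    rw [hqg, hVbchar (q g)]
    exact (auxCharComp q Vb g).symm
  · intro r hr
    have hπr : π r ∈ Rbar := (hHmem r).mp (hRH hr)
    have hm1 : π ((⟨r, Subgroup.le_normalizer hr⟩ : ↥(Subgroup.normalizer (R : Set G))) : G) ∈ (Subgroup.normalizer (Rbar : Set (G ⧸ Z))) :=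
      Subgroup.le_normalizer hπr
    rw [hφ ⟨r, Subgroup.le_normalizer hr⟩ hm1, hφ1]
    exact hwTriv (π r) hπr
  · intro hdvd
    rcases (Nat.Prime.dvd_mul hℓ).mp hdvd with h | h
    exacts [hZℓ h, hmb h]
  · rw [hφ1]
    exact hd1
  · rw [hcardN, hcardNb, hcardR]
    ring
end

section
/- Let G be a finite group, ℓ a prime, and Z a central subgroup of G whose order is not divisible by ℓ; write Ḡ = G/Z with canonical projection π. If (R, φ) is an ℓ-weight of G such that Z is contained in the kernel of φ, and R̄ = π(R), then (R̄, φ̄) is an ℓ-weight of Ḡ, where φ̄ is the unique character of N_{Ḡ}(R̄) = π(N_G(R)) satisfying φ̄(π(g)) = φ(g) for all g ∈ N_G(R). -/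
open scoped Classical

open scoped Classical

open Polynomial in
lemma aux_isIntegral_trace_of_pow_eq_one {n : Type} [Fintype n] [DecidableEq n]
    (A : Matrix n n ℂ) {N : ℕ} (hN : 0 < N) (hA : A ^ N = 1) :
    IsIntegral ℤ A.trace := by
  rw [Matrix.trace_eq_sum_roots_charpoly]
  refine IsIntegral.multiset_sum ?_
  intro μ hμ
  have hroot : A.charpoly.IsRoot μ :=
    (Polynomial.mem_roots (Matrix.charpoly_monic A).ne_zero).1 hμ
  have hdet : (μ • (1 : Matrix n n ℂ) - A).det = 0 := by
    have h1 : A.charpoly.eval μ = (μ • (1 : Matrix n n ℂ) - A).det := by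
      rw [Matrix.charpoly, ← Polynomial.coe_evalRingHom, RingHom.map_det]
      congr 1
      ext i j
      by_cases h : i = j
      · subst h
        simp [Matrix.one_apply]
      · simp [Matrix.charmatrix_apply_ne, Matrix.one_apply, h]
    rw [← h1]; exact hroot
  obtain ⟨v, hv, hv0⟩ := Matrix.exists_mulVec_eq_zero_iff.2 hdet
  have heig : A.mulVec v = μ • v := by
    rw [Matrix.sub_mulVec, Matrix.smul_mulVec, Matrix.one_mulVec, sub_eq_zero] at hv0
    exact hv0.symm
  have hpow : ∀ k : ℕ, (A ^ k).mulVec v = μ ^ k • v := by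
    intro k
    induction k with
    | zero => simp [Matrix.one_mulVec]
    | succ k ih =>
      rw [pow_succ', ← Matrix.mulVec_mulVec, ih, Matrix.mulVec_smul, heig, smul_smul, pow_succ]
  have hμN : μ ^ N = 1 := by
    have h2 := hpow N
    rw [hA, Matrix.one_mulVec] at h2
    obtain ⟨i, hi⟩ := Function.ne_iff.1 hv
    have h4 : v i = μ ^ N * v i := by
      conv_lhs => rw [h2]
      rfl
    have h3 : (μ ^ N - 1) * v i = 0 := by ring_nf; linear_combination -h4
    rcases mul_eq_zero.1 h3 with h | h
    · exact sub_eq_zero.1 h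
    · exact absurd h hi
  exact ⟨X ^ N - C 1, Polynomial.monic_X_pow_sub_C 1 hN.ne', by simp [hμN]⟩


lemma aux_isIntegral_character {H : Type} [Group H] [Fintype H] (W : FDRep ℂ H) (h : H) :
    IsIntegral ℤ (W.character h) := by
  let b := Module.finBasis ℂ W
  have htr : W.character h = (LinearMap.toMatrixAlgEquiv b (W.ρ h)).trace :=
    LinearMap.trace_eq_matrix_trace ℂ b _
  rw [htr]
  refine aux_isIntegral_trace_of_pow_eq_one (N := Fintype.card H) _ Fintype.card_pos ?_
  rw [← map_pow, ← map_pow, pow_card_eq_one, map_one, map_one]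

open CategoryTheory in
lemma aux_schur_scalar {H : Type} [Group H] (W : FDRep ℂ H) [Simple W]
    (f : Module.End ℂ W) (hf : ∀ h : H, W.ρ h * f = f * W.ρ h) :
    ∃ c : ℂ, f = c • LinearMap.id := by
  let F : W ⟶ W := ⟨FGModuleCat.ofHom f, fun g => by
    ext v
    exact (DFunLike.congr_fun (hf g) v).symm⟩
  obtain ⟨c, hc⟩ := CategoryTheory.endomorphism_simple_eq_smul_id ℂ F
  refine ⟨c, ?_⟩
  have := congrArg Action.Hom.hom hc
  rw [Action.smul_hom, Action.id_hom] at this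
  ext v
  have h2 := congrArg (fun t => t.hom.hom v) this
  exact h2.symm


lemma aux_mem_span_isIntegral {H : Type} [Group H] [Fintype H] (W : FDRep ℂ H)
    (T : Module.End ℂ W)
    (hT : T ∈ Submodule.span ℤ (Set.range fun h : H => (W.ρ h : Module.End ℂ W))) :
    IsIntegral ℤ T := by
  set s : Set (Module.End ℂ W) := Set.range fun h : H => (W.ρ h : Module.End ℂ W) with hs
  have h1 : (1 : Module.End ℂ W) ∈ Submodule.span ℤ s :=
    Submodule.subset_span ⟨1, by simp⟩
  have hmul : ∀ x y : Module.End ℂ W, x ∈ Submodule.span ℤ s → y ∈ Submodule.span ℤ s →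
      x * y ∈ Submodule.span ℤ s := by
    intro x y hx hy
    have : Submodule.span ℤ s * Submodule.span ℤ s ≤ Submodule.span ℤ s := by
      rw [Submodule.span_mul_span]
      refine Submodule.span_le.2 ?_
      rintro - ⟨a, ⟨g, rfl⟩, b, ⟨g', rfl⟩, rfl⟩
      exact Submodule.subset_span ⟨g * g', by simp [map_mul]⟩
    exact this (Submodule.mul_mem_mul hx hy)
  let S : Subalgebra ℤ (Module.End ℂ W) := (Submodule.span ℤ s).toSubalgebra h1 hmul
  have hfg : (Subalgebra.toSubmodule S).FG := Submodule.fg_span (Set.finite_range _)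
  exact IsIntegral.of_mem_of_fg S hfg T hT


open CategoryTheory in
lemma aux_sum_char_mul_char_inv {H : Type} [Group H] [Fintype H] (W : FDRep ℂ H) [Simple W] :
    ∑ h : H, W.character h * W.character h⁻¹ = (Fintype.card H : ℂ) := by
  haveI : Invertible ((Nat.card H : ℂ)) :=
    invertibleOfNonzero (by exact_mod_cast (Nat.card_pos (α := H)).ne')
  have h0 := FDRep.char_orthonormal (k := ℂ) (G := H) W W
  rw [if_pos ⟨Iso.refl W⟩] at h0
  have hcard : (Nat.card H : ℂ) ≠ 0 := by
    exact_mod_cast (Nat.card_pos (α := H)).ne'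
  rw [inv_mul_eq_iff_eq_mul₀ hcard] at h0
  simpa [Nat.card_eq_fintype_card] using h0


open CategoryTheory in
theorem aux_finrank_dvd_card {H : Type} [Group H] [Fintype H] (W : FDRep ℂ H) [Simple W] :
    Module.finrank ℂ W ∣ Fintype.card H := by
  set d := Module.finrank ℂ W with hd
  have hd0 : d ≠ 0 := by
    intro h0
    have hss : Subsingleton (W : Type) := Module.finrank_zero_iff.1 h0
    refine CategoryTheory.id_nonzero W ?_
    apply Action.Hom.ext
    ext v
    exact hss.elim _ _
  haveI : Nontrivial W := by
    refine Module.nontrivial_of_finrank_pos (R := ℂ) ?_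
    omega
  have hinj : Function.Injective (algebraMap ℂ (Module.End ℂ W)) := by
    intro a b hab
    obtain ⟨v, hv⟩ := exists_ne (0 : W)
    have h1 : a • v = b • v := by
      have := DFunLike.congr_fun hab v
      simpa [Module.algebraMap_end_apply] using this
    have h2 : (a - b) • v = 0 := by rw [sub_smul, h1, sub_self]
    rcases smul_eq_zero.1 h2 with h | h
    · exact sub_eq_zero.1 h
    · exact absurd h hv
  set χ := W.character with hχ
  set fib : ConjClasses H → Finset H :=
    fun c => Finset.univ.filter (fun h => ConjClasses.mk h = c) with hfibdef
  set z : ConjClasses H → Module.End ℂ W :=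
    fun c => ∑ h ∈ fib c, (W.ρ h : Module.End ℂ W) with hzdef
  have hmemfib : ∀ (c : ConjClasses H) (g h : H), h ∈ fib c → g * h * g⁻¹ ∈ fib c := by
    intro c g h hh
    simp only [hfibdef, Finset.mem_filter, Finset.mem_univ, true_and] at hh ⊢
    rw [← hh]
    exact ConjClasses.mk_eq_mk_iff_isConj.2 (IsConj.symm (isConj_iff.2 ⟨g, rfl⟩))
  have hcomm : ∀ (c : ConjClasses H) (g : H), W.ρ g * z c = z c * W.ρ g := by
    intro c g
    rw [hzdef]
    simp only
    rw [Finset.mul_sum, Finset.sum_mul]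
    refine Finset.sum_nbij' (fun h => g * h * g⁻¹) (fun h => g⁻¹ * h * g) ?_ ?_ ?_ ?_ ?_
    · intro a ha; exact hmemfib c g a ha
    · intro a ha
      have := hmemfib c g⁻¹ a ha
      simpa using this
    · intro a _; group
    · intro a _; group
    · intro a _
      rw [← map_mul, ← map_mul]
      congr 1
      group
  have hsc : ∀ c : ConjClasses H, ∃ ω : ℂ, z c = ω • LinearMap.id ∧ IsIntegral ℤ ω ∧
      (∑ h ∈ fib c, χ h) = ω * d := by
    intro c
    obtain ⟨ω, hω⟩ := aux_schur_scalar W (z c) (fun g => hcomm c g)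
    refine ⟨ω, hω, ?_, ?_⟩
    · have hz_int : IsIntegral ℤ (z c) := by
        refine aux_mem_span_isIntegral W (z c) ?_
        exact Submodule.sum_mem _ (fun h _ => Submodule.subset_span ⟨h, rfl⟩)
      rw [hω] at hz_int
      have : (ω • LinearMap.id : Module.End ℂ W) = algebraMap ℂ (Module.End ℂ W) ω := by
        ext v; simp [Module.algebraMap_end_apply]
      rw [this] at hz_int
      exact (isIntegral_algebraMap_iff hinj).1 hz_int
    · have htr := congrArg (LinearMap.trace ℂ W) hω
      rw [map_sum] at htr
      rw [map_smul] at htr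
      rw [LinearMap.trace_id] at htr
      simpa [hχ, FDRep.character, smul_eq_mul] using htr
  choose ω hω hint hωd using hsc
  have hsum := aux_sum_char_mul_char_inv W
  have hfib2 : ∑ h : H, χ h * χ h⁻¹ = ∑ c : ConjClasses H, ∑ h ∈ fib c, χ h * χ h⁻¹ :=
    (Finset.sum_fiberwise _ _ _).symm
  have hperclass : ∀ c : ConjClasses H,
      ∑ h ∈ fib c, χ h * χ h⁻¹ = (ω c * d) * χ ((Quotient.out c)⁻¹) := by
    intro c
    have : ∑ h ∈ fib c, χ h * χ h⁻¹ = ∑ h ∈ fib c, χ h * χ ((Quotient.out c)⁻¹) := by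
      refine Finset.sum_congr rfl ?_
      intro h hh
      simp only [hfibdef, Finset.mem_filter, Finset.mem_univ, true_and] at hh
      have hout : ConjClasses.mk (Quotient.out c) = c := Quotient.out_eq c
      have hconj : IsConj (Quotient.out c) h :=
        ConjClasses.mk_eq_mk_iff_isConj.1 (by rw [hout, hh])
      obtain ⟨u, hu⟩ := isConj_iff.1 hconj
      have : h⁻¹ = u * (Quotient.out c)⁻¹ * u⁻¹ := by rw [← hu]; group
      rw [this, hχ, FDRep.char_conj]
    rw [this, ← Finset.sum_mul, hωd c]
  have hmain : (Fintype.card H : ℂ) =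
      d * ∑ c : ConjClasses H, ω c * χ ((Quotient.out c)⁻¹) := by
    rw [← hsum, hfib2, Finset.mul_sum]
    refine Finset.sum_congr rfl (fun c _ => ?_)
    rw [hperclass c]; ring
  set s : ℂ := ∑ c : ConjClasses H, ω c * χ ((Quotient.out c)⁻¹) with hsdef
  have hs_int : IsIntegral ℤ s :=
    IsIntegral.sum _ (fun c _ => (hint c).mul (aux_isIntegral_character W _))
  have hdC : (d : ℂ) ≠ 0 := Nat.cast_ne_zero.2 hd0
  set q : ℚ := (Fintype.card H : ℚ) / (d : ℚ) with hqdef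
  have hq : (algebraMap ℚ ℂ) q = s := by
    rw [hqdef]
    push_cast
    rw [div_eq_iff hdC, hmain]
    ring
  have hq_int : IsIntegral ℤ q := by
    refine (isIntegral_algebraMap_iff (R := ℤ) (A := ℚ) (B := ℂ) ?_).1 (hq ▸ hs_int)
    exact (algebraMap ℚ ℂ).injective
  obtain ⟨y, hy⟩ := IsIntegrallyClosed.isIntegral_iff.1 hq_int
  have hyq : (y : ℚ) = q := hy
  have hcard : (Fintype.card H : ℚ) = (y : ℚ) * (d : ℚ) := by
    rw [hyq, hqdef]
    field_simp
  have hZ : (Fintype.card H : ℤ) = y * (d : ℤ) := by exact_mod_cast hcard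
  have : (d : ℤ) ∣ (Fintype.card H : ℤ) := ⟨y, by linarith⟩
  exact_mod_cast this


section Transfer
open CategoryTheory

variable {k : Type} [Field k]

/-- Subrepresentation on an invariant submodule. -/
noncomputable def aux_subrep {Γ : Type} [Monoid Γ] (U : FDRep k Γ) (p : Submodule k U)
    (hp : ∀ (γ : Γ), ∀ x ∈ p, U.ρ γ x ∈ p) : Representation k Γ ↥p where
  toFun γ := (U.ρ γ).restrict (hp γ)
  map_one' := by
    apply LinearMap.ext; intro x; apply Subtype.ext
    simp [LinearMap.restrict_apply]
  map_mul' γ δ := by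
    apply LinearMap.ext; intro x; apply Subtype.ext
    simp [LinearMap.restrict_apply]

lemma aux_mono_of_injective {Γ : Type} [Monoid Γ] {Y U : FDRep k Γ} (g : Y ⟶ U)
    (hg : Function.Injective g.hom) : Mono g := by
  constructor
  intro X u v huv
  apply Action.Hom.ext
  ext x
  have h1 := congrArg Action.Hom.hom huv
  rw [Action.comp_hom, Action.comp_hom] at h1
  have h2 := ConcreteCategory.congr_hom h1 x
  exact hg h2

lemma aux_injective_of_mono {Γ : Type} [Monoid Γ] {Y U : FDRep k Γ} (g : Y ⟶ U) [Mono g] :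
    Function.Injective g.hom := by
  set K : Submodule k Y := LinearMap.ker g.hom.hom.hom with hK
  have hinv : ∀ (γ : Γ), ∀ x ∈ K, Y.ρ γ x ∈ K := by
    intro γ x hx
    have hcomm := ConcreteCategory.congr_hom (g.comm γ) x
    have hx0 : g.hom x = 0 := LinearMap.mem_ker.1 hx
    show g.hom (Y.ρ γ x) = 0
    calc g.hom (Y.ρ γ x) = U.ρ γ (g.hom x) := hcomm
    _ = 0 := by rw [hx0, map_zero]
  let X : FDRep k Γ := FDRep.of (aux_subrep Y K hinv)
  let ι : X ⟶ Y := ⟨FGModuleCat.ofHom (K.subtype : ↥K →ₗ[k] Y), by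
    intro γ
    ext x
    rfl⟩
  have hι : ι ≫ g = (0 : X ⟶ Y) ≫ g := by
    rw [Limits.zero_comp]
    apply Action.Hom.ext
    rw [Action.comp_hom, Action.zero_hom]
    ext x
    exact LinearMap.mem_ker.1 x.2
  have hι0 : ι = 0 := (cancel_mono g).1 (by rw [hι, Limits.zero_comp])
  have hK0 : K = ⊥ := by
    rw [Submodule.eq_bot_iff]
    intro x hx
    have := congrArg Action.Hom.hom hι0
    rw [Action.zero_hom] at this
    exact ConcreteCategory.congr_hom this (⟨x, hx⟩ : ↥K)
  rw [← LinearMap.ker_eq_bot]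
  exact hK0

lemma aux_simple_of_surjective {Γ Δ : Type} [Monoid Γ] [Monoid Δ]
    (f : Γ →* Δ) (hf : Function.Surjective f) (W : FDRep k Δ)
    (hU : Simple (FDRep.of ((W.ρ).comp f))) : Simple W := by
  set U : FDRep k Γ := FDRep.of ((W.ρ).comp f) with hUdef
  constructor
  intro Y g hmono
  constructor
  · intro hiso h0
    have hW : 𝟙 W = 0 := by
      calc 𝟙 W = inv g ≫ g := (IsIso.inv_hom_id g).symm
      _ = inv g ≫ (0 : Y ⟶ W) := congrArg (fun t => inv g ≫ t) h0
      _ = 0 := Limits.comp_zero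
    have h1 : (𝟙 U : U ⟶ U) = 0 := by
      apply Action.Hom.ext
      rw [Action.id_hom, Action.zero_hom]
      have h2 := congrArg Action.Hom.hom hW
      rw [Action.id_hom, Action.zero_hom] at h2
      exact h2
    exact CategoryTheory.id_nonzero U h1
  · intro hne
    haveI := hmono
    set Y' : FDRep k Γ := FDRep.of ((Y.ρ).comp f) with hY'def
    let g' : Y' ⟶ U := ⟨g.hom, fun γ => g.comm (f γ)⟩
    haveI : Mono g' := aux_mono_of_injective g' (aux_injective_of_mono g)
    have hg'ne : g' ≠ 0 := by
      intro h0
      apply hne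
      apply Action.Hom.ext
      have := congrArg Action.Hom.hom h0
      rw [Action.zero_hom] at this
      rw [Action.zero_hom]
      exact this
    haveI : Simple U := hU
    haveI hIso' : IsIso g' := isIso_of_mono_of_nonzero hg'ne
    let h' : U ⟶ Y' := inv g'
    let ginv : W ⟶ Y := ⟨h'.hom, by
      intro δ
      obtain ⟨γ, rfl⟩ := hf δ
      exact h'.comm γ⟩
    refine ⟨⟨ginv, ?_, ?_⟩⟩
    · apply Action.Hom.ext
      rw [Action.comp_hom, Action.id_hom]
      have := congrArg Action.Hom.hom (IsIso.hom_inv_id g')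
      rw [Action.comp_hom, Action.id_hom] at this
      exact this
    · apply Action.Hom.ext
      rw [Action.comp_hom, Action.id_hom]
      have := congrArg Action.Hom.hom (IsIso.inv_hom_id g')
      rw [Action.comp_hom, Action.id_hom] at this
      exact this

end Transfer

lemma aux_rho_eq_one_of_char_const {Γ : Type} [Group Γ] [Fintype Γ] (U : FDRep ℂ Γ)
    (h : ∀ γ : Γ, U.character γ = (Module.finrank ℂ U : ℂ)) :
    ∀ γ : Γ, U.ρ γ = LinearMap.id := by
  haveI : Invertible ((Fintype.card Γ : ℂ)) :=
    invertibleOfNonzero (by exact_mod_cast (Fintype.card_ne_zero (α := Γ)))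
  have havg := FDRep.average_char_eq_finrank_invariants U
  have hsum : ∑ g : Γ, U.character g = (Fintype.card Γ : ℂ) * (Module.finrank ℂ U : ℂ) := by
    rw [Finset.sum_congr rfl (fun γ _ => h γ), Finset.sum_const, Finset.card_univ,
      nsmul_eq_mul]
  rw [hsum] at havg
  have hC : (Module.finrank ℂ (Representation.invariants U.ρ) : ℂ) = (Module.finrank ℂ U : ℂ) := by
    rw [← havg, Nat.card_eq_fintype_card, ← mul_assoc, inv_mul_cancel₀ (by exact_mod_cast (Fintype.card_ne_zero (α := Γ))), one_mul]
  have heq : Module.finrank ℂ (Representation.invariants U.ρ) = Module.finrank ℂ U := by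
    exact_mod_cast hC
  have htop : Representation.invariants U.ρ = ⊤ := Submodule.eq_top_of_finrank_eq heq
  intro γ
  apply LinearMap.ext; intro v
  have hv : v ∈ Representation.invariants U.ρ := htop ▸ Submodule.mem_top
  exact hv γ


open scoped Pointwise

section GroupTheory

variable {G : Type} [Group G] [Finite G] {ℓ : ℕ} (hℓ : ℓ.Prime)
  {Z : Subgroup G} [Z.Normal] (hZc : Z ≤ Subgroup.center G) (hZℓ : ¬ ℓ ∣ Nat.card Z)
  {R : Subgroup G} (hR : IsPGroup ℓ ↥R)

include hℓ hZℓ in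
lemma aux_z_triv (z : G) (hz : z ∈ Z) {n : ℕ} (hzn : z ^ (ℓ ^ n) = 1) : z = 1 := by
  have h1 : orderOf z ∣ ℓ ^ n := orderOf_dvd_of_pow_eq_one hzn
  have h2 : orderOf z ∣ Nat.card Z := by
    exact Subgroup.orderOf_dvd_natCard Z hz
  have hcop : (Nat.Coprime (ℓ ^ n) (Nat.card Z)) :=
    Nat.Coprime.pow_left n ((Nat.Prime.coprime_iff_not_dvd hℓ).2 hZℓ)
  have h3 : orderOf z ∣ Nat.gcd (ℓ ^ n) (Nat.card Z) := Nat.dvd_gcd h1 h2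
  rw [Nat.Coprime] at hcop
  rw [hcop, Nat.dvd_one] at h3
  exact orderOf_eq_one_iff.1 h3

include hℓ hZc hZℓ hR in
lemma aux_mem_R_of_pPow (c : G) (hc : c ∈ R ⊔ Z) {n : ℕ} (hcn : c ^ (ℓ ^ n) = 1) :
    c ∈ R := by
  have hc2 : c ∈ (R : Set G) * (Z : Set G) := by
    rw [← Subgroup.mul_normal R Z]; exact hc
  obtain ⟨r, hr, z, hz, rfl⟩ := hc2
  suffices hz1 : z = 1 by
    subst hz1
    show r * 1 ∈ R
    rw [mul_one]; exact hr
  have hcn' : (r * z) ^ (ℓ ^ n) = 1 := hcn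
  have hcomm : Commute r z := ((Subgroup.mem_center_iff.1 (hZc hz)) r)
  obtain ⟨k, hk⟩ := hR ⟨r, hr⟩
  have hrk : r ^ (ℓ ^ k) = 1 := by
    have := congrArg (Subgroup.subtype R) hk
    simpa using this
  have hzpow : z ^ (ℓ ^ (k + n)) = 1 := by
    have h1 : (r * z) ^ (ℓ ^ (k + n)) = r ^ (ℓ ^ (k + n)) * z ^ (ℓ ^ (k + n)) :=
      hcomm.mul_pow _
    have h2 : (r * z) ^ (ℓ ^ (k + n)) = 1 := by
      rw [pow_add, mul_comm (ℓ ^ k), pow_mul, hcn', one_pow]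
    have h3 : r ^ (ℓ ^ (k + n)) = 1 := by
      rw [pow_add, pow_mul, hrk, one_pow]
    rw [h1, h3, one_mul] at h2
    exact h2
  exact aux_z_triv hℓ hZℓ z hz hzpow

include hℓ hZc hZℓ hR in
lemma aux_normalizer_map :
    (Subgroup.normalizer ((Subgroup.map (QuotientGroup.mk' Z) R : Subgroup (G ⧸ Z)) : Set (G ⧸ Z)))
      = Subgroup.map (QuotientGroup.mk' Z) (Subgroup.normalizer (R : Set G)) := by
  set π := QuotientGroup.mk' Z with hπ
  set Rb := Subgroup.map π R with hRb
  have hconj : ∀ x : G, (π x) ∈ (Subgroup.normalizer (Rb : Set (G ⧸ Z))) → ∀ h ∈ R, x * h * x⁻¹ ∈ R := by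
    intro x hx h hh
    have h1 : π (x * h * x⁻¹) ∈ Rb := by
      have hmem : π h ∈ Rb := Subgroup.mem_map.2 ⟨h, hh, rfl⟩
      have h2 := (Subgroup.mem_normalizer_iff.1 hx (π h)).1 hmem
      simpa [map_mul] using h2
    have h3 : x * h * x⁻¹ ∈ R ⊔ Z := by
      have h4 : x * h * x⁻¹ ∈ Subgroup.comap π Rb := h1
      rw [hRb, Subgroup.comap_map_eq, QuotientGroup.ker_mk'] at h4
      exact h4
    obtain ⟨k, hk⟩ := hR ⟨h, hh⟩
    have hh_pow : h ^ (ℓ ^ k) = 1 := by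
      have := congrArg (Subgroup.subtype R) hk; simpa using this
    have hc_pow : (x * h * x⁻¹) ^ (ℓ ^ k) = 1 := by
      rw [conj_pow, hh_pow]; group
    exact aux_mem_R_of_pPow hℓ hZc hZℓ hR _ h3 hc_pow
  apply le_antisymm
  · intro xb hxb
    obtain ⟨x, rfl⟩ := QuotientGroup.mk'_surjective Z xb
    refine Subgroup.mem_map.2 ⟨x, ?_, rfl⟩
    rw [Subgroup.mem_normalizer_iff]
    intro h
    constructor
    · intro hh; exact hconj x hxb h hh
    · intro hh
      have hx' : π x⁻¹ ∈ (Subgroup.normalizer (Rb : Set (G ⧸ Z))) := by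
        rw [map_inv]; exact (Subgroup.normalizer (Rb : Set (G ⧸ Z))).inv_mem hxb
      have h5 := hconj x⁻¹ hx' _ hh
      have h6 : x⁻¹ * (x * h * x⁻¹) * x⁻¹⁻¹ = h := by group
      rwa [h6] at h5
  · intro xb hxb
    obtain ⟨x, hxN, rfl⟩ := Subgroup.mem_map.1 hxb
    rw [Subgroup.mem_normalizer_iff]
    intro hb
    constructor
    · intro hhb0
      obtain ⟨h, hh, rfl⟩ := Subgroup.mem_map.1 hhb0
      refine Subgroup.mem_map.2 ⟨x * h * x⁻¹, (Subgroup.mem_normalizer_iff.1 hxN h).1 hh, ?_⟩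
      simp [map_mul]
    · intro hhb
      obtain ⟨h, rfl⟩ := QuotientGroup.mk'_surjective Z hb
      have h1 : π (x * h * x⁻¹) ∈ Rb := by rw [map_mul, map_mul, map_inv]; exact hhb
      have h4 : x * h * x⁻¹ ∈ R ⊔ Z := by
        have h5 : x * h * x⁻¹ ∈ Subgroup.comap π Rb := h1
        rw [hRb, Subgroup.comap_map_eq, QuotientGroup.ker_mk'] at h5
        exact h5
      have h6 : x * h * x⁻¹ ∈ (R : Set G) * (Z : Set G) := by
        rw [← Subgroup.mul_normal R Z]; exact h4
      obtain ⟨r, hr, z, hz, heq0⟩ := h6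
      have heq : r * z = x * h * x⁻¹ := heq0
      have hxinv : x⁻¹ ∈ (Subgroup.normalizer (R : Set G)) := (Subgroup.normalizer (R : Set G)).inv_mem hxN
      have hrx : x⁻¹ * r * x ∈ R := by
        have h7 := (Subgroup.mem_normalizer_iff.1 hxinv r).1 hr
        have h8 : x⁻¹ * r * x⁻¹⁻¹ = x⁻¹ * r * x := by group
        rwa [h8] at h7
      have hzx : x * z = z * x := (Subgroup.mem_center_iff.1 (hZc hz)) x
      have hhh : h = (x⁻¹ * r * x) * z := by
        have h9 : h = x⁻¹ * (r * z) * x := by rw [heq]; group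
        rw [h9]
        calc x⁻¹ * (r * z) * x = x⁻¹ * r * (z * x) := by group
        _ = x⁻¹ * r * (x * z) := by rw [hzx]
        _ = (x⁻¹ * r * x) * z := by group
      refine Subgroup.mem_map.2 ⟨x⁻¹ * r * x, hrx, ?_⟩
      have hπz : π z = 1 := (QuotientGroup.eq_one_iff z).2 hz
      show π (x⁻¹ * r * x) = π h
      rw [hhh]
      conv_rhs => rw [map_mul, hπz, mul_one]

end GroupTheory


section Cards
variable {G : Type} [Group G] [Finite G] {Z : Subgroup G} [Z.Normal]

lemma aux_card_map_of_inter (H : Subgroup G) (hinter : ∀ x ∈ H, x ∈ Z → x = 1) :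
    Nat.card ↥(Subgroup.map (QuotientGroup.mk' Z) H) = Nat.card ↥H := by
  set f := (QuotientGroup.mk' Z).comp H.subtype with hf
  have hinj : Function.Injective f := by
    rw [← MonoidHom.ker_eq_bot_iff]
    rw [Subgroup.eq_bot_iff_forall]
    intro x hx
    have h1 : (QuotientGroup.mk' Z) ↑x = 1 := hx
    have hxZ : (x : G) ∈ Z := (QuotientGroup.eq_one_iff _).1 h1
    exact Subtype.ext (hinter ↑x x.2 hxZ)
  have hrange : f.range = Subgroup.map (QuotientGroup.mk' Z) H := by
    rw [hf, MonoidHom.range_comp, Subgroup.range_subtype]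
  have h2 : Nat.card ↥H = Nat.card ↥f.range :=
    Nat.card_congr (MonoidHom.ofInjective hinj).toEquiv
  rw [← hrange, ← h2]

lemma aux_card_map_of_le (H : Subgroup G) (hle : Z ≤ H) :
    Nat.card ↥H = Nat.card ↥(Subgroup.map (QuotientGroup.mk' Z) H) * Nat.card ↥Z := by
  set f := (QuotientGroup.mk' Z).comp H.subtype with hf
  have hrange : f.range = Subgroup.map (QuotientGroup.mk' Z) H := by
    rw [hf, MonoidHom.range_comp, Subgroup.range_subtype]
  have hker : f.ker = Z.subgroupOf H := by
    ext x
    simp only [MonoidHom.mem_ker, hf, MonoidHom.comp_apply, Subgroup.mem_subgroupOf]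
    rw [show (QuotientGroup.mk' Z) (H.subtype x) = ((x : G) : G ⧸ Z) from rfl]
    exact QuotientGroup.eq_one_iff _
  have h1 : Nat.card ↥H = Nat.card (↥H ⧸ f.ker) * Nat.card ↥f.ker :=
    Subgroup.card_eq_card_quotient_mul_card_subgroup _
  have h2 : Nat.card (↥H ⧸ f.ker) = Nat.card ↥f.range :=
    Nat.card_congr (QuotientGroup.quotientKerEquivRange f).toEquiv
  have h3 : Nat.card ↥f.ker = Nat.card ↥Z := by
    rw [hker]; exact Nat.card_congr (Subgroup.subgroupOfEquivOfLe hle).toEquiv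
  rw [h1, h2, h3, hrange]

end Cards



theorem statement5 (G : Type) [Group G] [Finite G] (ℓ : ℕ) (hℓ : ℓ.Prime)
    (Z : Subgroup G) [Z.Normal] (hZc : Z ≤ Subgroup.center G)
    (hZℓ : ¬ ℓ ∣ Nat.card Z)
    (R : Subgroup G) (φ : ↥(Subgroup.normalizer (R : Set G)) → ℂ) (hw : IsWeight ℓ R φ)
    (hker : ∀ (z : G) (hz : z ∈ Z) (hn : z ∈ (Subgroup.normalizer (R : Set G))), φ ⟨z, hn⟩ = φ 1)
    (Rbar : Subgroup (G ⧸ Z)) (hRbar : Rbar = Subgroup.map (QuotientGroup.mk' Z) R)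
    (φbar : ↥(Subgroup.normalizer (Rbar : Set (G ⧸ Z))) → ℂ)
    (hφbar : ∀ (n : ↥(Subgroup.normalizer (R : Set G))) (h : QuotientGroup.mk' Z ↑n ∈ (Subgroup.normalizer (Rbar : Set (G ⧸ Z)))),
      φbar ⟨QuotientGroup.mk' Z ↑n, h⟩ = φ n) :
    IsWeight ℓ Rbar φbar := by
  subst hRbar
  obtain ⟨hRp, ⟨V, hVs, hVchar⟩, hkerR, d, m, hm, hd, hcard⟩ := hw
  have hNmap : (Subgroup.normalizer ((Subgroup.map (QuotientGroup.mk' Z) R : Subgroup (G ⧸ Z)) : Set (G ⧸ Z)))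
      = Subgroup.map (QuotientGroup.mk' Z) (Subgroup.normalizer (R : Set G)) :=
    aux_normalizer_map hℓ hZc hZℓ hRp
  have hNpos : 0 < Nat.card ↥(Subgroup.normalizer (R : Set G)) := Nat.card_pos
  have hd0 : d ≠ 0 := by
    rintro rfl
    rw [Nat.mul_zero, Nat.zero_mul] at hcard
    omega
  have hfr : Module.finrank ℂ ↥V = d := by
    have h1 := hVchar 1
    rw [FDRep.char_one, hd] at h1
    exact_mod_cast h1.symm
  have hZN : Z ≤ (Subgroup.normalizer (R : Set G)) := le_trans hZc (Subgroup.center_le_normalizer _)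
  -- ρ is trivial on Z
  have hρZ : ∀ nz : ↥(Subgroup.normalizer (R : Set G)), (nz : G) ∈ Z → V.ρ nz = LinearMap.id := by
    have hFT : Fintype ↥(Z.subgroupOf (Subgroup.normalizer (R : Set G))) := Fintype.ofFinite _
    set ι : ↥(Z.subgroupOf (Subgroup.normalizer (R : Set G))) →* ↥(Subgroup.normalizer (R : Set G)) := (Z.subgroupOf (Subgroup.normalizer (R : Set G))).subtype with hιdef
    set U : FDRep ℂ ↥(Z.subgroupOf (Subgroup.normalizer (R : Set G))) := FDRep.of (V.ρ.comp ι) with hUdef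
    have hUchar : ∀ γ, U.character γ = (Module.finrank ℂ ↥U : ℂ) := by
      intro γ
      have h1 : U.character γ = V.character (ι γ) := rfl
      have h2 : V.character (ι γ) = φ (ι γ) := (hVchar (ι γ)).symm
      have h3 : φ (ι γ) = φ 1 := by
        have h4 := hker ((ι γ) : G) γ.2 (ι γ).2
        exact h4
      have h5 : (Module.finrank ℂ ↥U : ℂ) = (Module.finrank ℂ ↥V : ℂ) := by norm_cast
      rw [h1, h2, h3, h5, ← FDRep.char_one V, hVchar 1]
    have hone := aux_rho_eq_one_of_char_const U hUchar
    intro nz hnz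
    have h6 := hone ⟨nz, Subgroup.mem_subgroupOf.2 hnz⟩
    exact h6
  -- the lifted representation
  have hsub : ∀ n : ↥(Subgroup.normalizer (R : Set G)), (QuotientGroup.mk' Z) ↑n ∈ (Subgroup.normalizer ((Subgroup.map (QuotientGroup.mk' Z) R : Subgroup (G ⧸ Z)) : Set (G ⧸ Z))) := by
    intro n
    rw [hNmap]
    exact Subgroup.mem_map.2 ⟨↑n, n.2, rfl⟩
  set f3 : ↥(Subgroup.normalizer (R : Set G)) →* ↥(Subgroup.normalizer ((Subgroup.map (QuotientGroup.mk' Z) R : Subgroup (G ⧸ Z)) : Set (G ⧸ Z))) := MonoidHom.codRestrict ((QuotientGroup.mk' Z).comp (Subgroup.normalizer (R : Set G)).subtype) (Subgroup.normalizer ((Subgroup.map (QuotientGroup.mk' Z) R : Subgroup (G ⧸ Z)) : Set (G ⧸ Z))) (fun n => hsub n)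
    with hf3def
  have hf3surj : Function.Surjective f3 := by
    intro y
    have hy : (y : G ⧸ Z) ∈ Subgroup.map (QuotientGroup.mk' Z) (Subgroup.normalizer (R : Set G)) := by rw [← hNmap]; exact y.2
    obtain ⟨x, hx, hxy⟩ := Subgroup.mem_map.1 hy
    exact ⟨⟨x, hx⟩, Subtype.ext hxy⟩
  have hf3ker : f3.ker ≤ (V.ρ : ↥(Subgroup.normalizer (R : Set G)) →* Module.End ℂ V).ker := by
    intro n hn
    have h1 : (QuotientGroup.mk' Z) ↑n = 1 := congrArg Subtype.val hn
    have h2 : (n : G) ∈ Z := (QuotientGroup.eq_one_iff _).1 h1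
    show V.ρ n = 1
    rw [hρZ n h2]
    rfl
  set e := QuotientGroup.quotientKerEquivOfSurjective f3 hf3surj with hedef
  set ρb : Representation ℂ ↥(Subgroup.normalizer ((Subgroup.map (QuotientGroup.mk' Z) R : Subgroup (G ⧸ Z)) : Set (G ⧸ Z))) V :=
    (QuotientGroup.lift f3.ker V.ρ hf3ker).comp e.symm.toMonoidHom with hρbdef
  have hρbcomp : ∀ n : ↥(Subgroup.normalizer (R : Set G)), ρb (f3 n) = V.ρ n := by
    intro n
    have h1 : e.symm (f3 n) = (QuotientGroup.mk n : ↥(Subgroup.normalizer (R : Set G)) ⧸ f3.ker) := by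
      rw [MulEquiv.symm_apply_eq]
      rfl
    show (QuotientGroup.lift f3.ker V.ρ hf3ker) (e.symm (f3 n)) = V.ρ n
    rw [h1]
    rfl
  set W : FDRep ℂ ↥(Subgroup.normalizer ((Subgroup.map (QuotientGroup.mk' Z) R : Subgroup (G ⧸ Z)) : Set (G ⧸ Z))) := FDRep.of ρb with hWdef
  have hcompeq : ρb.comp f3 = V.ρ := MonoidHom.ext fun n => hρbcomp n
  haveI hWs : CategoryTheory.Simple W := by
    refine aux_simple_of_surjective f3 hf3surj W ?_
    have h1 : W.ρ.comp f3 = V.ρ := hcompeq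
    rw [h1]
    exact hVs
  have hWchar : ∀ y : ↥(Subgroup.normalizer ((Subgroup.map (QuotientGroup.mk' Z) R : Subgroup (G ⧸ Z)) : Set (G ⧸ Z))), φbar y = W.character y := by
    intro y
    obtain ⟨n, rfl⟩ := hf3surj y
    have h1 : W.character (f3 n) = V.character n := by
      show LinearMap.trace ℂ _ (W.ρ (f3 n)) = _
      have h2 : W.ρ (f3 n) = V.ρ n := hρbcomp n
      rw [h2]
      rfl
    have h2 : φbar (f3 n) = φ n := hφbar n (hsub n)
    rw [h2, h1, hVchar n]
  have hφbar1 : φbar 1 = φ 1 := by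
    have h1 := hφbar 1 (hsub 1)
    have h2 : f3 (1 : ↥(Subgroup.normalizer (R : Set G))) = 1 := map_one f3
    calc φbar 1 = φbar (f3 1) := by rw [h2]
    _ = φ 1 := hφbar 1 (hsub 1)
  refine ⟨hRp.map (QuotientGroup.mk' Z), ⟨W, hWs, hWchar⟩, ?_, ?_⟩
  · -- kernel condition
    intro r hr
    obtain ⟨r0, hr0, rfl⟩ := Subgroup.mem_map.1 hr
    have hn0 : r0 ∈ (Subgroup.normalizer (R : Set G)) := Subgroup.le_normalizer hr0
    have h2 : f3 ⟨r0, hn0⟩ = ⟨(QuotientGroup.mk' Z) r0, Subgroup.le_normalizer hr⟩ := Subtype.ext rfl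
    have h1 : φbar (f3 ⟨r0, hn0⟩) = φ ⟨r0, hn0⟩ := hφbar ⟨r0, hn0⟩ (hsub ⟨r0, hn0⟩)
    have h3 : φ ⟨r0, hn0⟩ = φ 1 := hkerR r0 hr0
    rw [← h2, h1, h3, ← hφbar1]
  · -- defect zero numbers
    have hRZ1 : ∀ x ∈ R, x ∈ Z → x = 1 := by
      intro x hx hxZ
      obtain ⟨k, hk⟩ := hRp ⟨x, hx⟩
      have h1 : x ^ (ℓ ^ k) = 1 := by
        have := congrArg (Subgroup.subtype R) hk
        simpa using this
      exact aux_z_triv hℓ hZℓ x hxZ h1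
    have hcardR : Nat.card ↥(Subgroup.map (QuotientGroup.mk' Z) R) = Nat.card ↥R :=
      aux_card_map_of_inter R hRZ1
    have hcardN : Nat.card ↥(Subgroup.normalizer (R : Set G)) = Nat.card ↥(Subgroup.map (QuotientGroup.mk' Z) (Subgroup.normalizer (R : Set G))) * Nat.card ↥Z :=
      aux_card_map_of_le (Subgroup.normalizer (R : Set G)) hZN
    have hfrW : Module.finrank ℂ ↥W = d := by
      rw [show Module.finrank ℂ ↥W = Module.finrank ℂ ↥V from rfl]
      exact hfr
    haveI : Fintype ↥(Subgroup.normalizer ((Subgroup.map (QuotientGroup.mk' Z) R : Subgroup (G ⧸ Z)) : Set (G ⧸ Z))) := Fintype.ofFinite _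
    have hdvd : d ∣ Nat.card ↥(Subgroup.normalizer ((Subgroup.map (QuotientGroup.mk' Z) R : Subgroup (G ⧸ Z)) : Set (G ⧸ Z))) := by
      have h1 := aux_finrank_dvd_card W
      rw [hfrW] at h1
      rwa [Nat.card_eq_fintype_card]
    haveI : Fact ℓ.Prime := ⟨hℓ⟩
    obtain ⟨k, hk⟩ := IsPGroup.iff_card.1 hRp
    obtain ⟨b, hb⟩ := hdvd
    have hZpos : 0 < Nat.card ↥Z := Nat.card_pos
    have hcard2 : Nat.card ↥(Subgroup.normalizer ((Subgroup.map (QuotientGroup.mk' Z) R : Subgroup (G ⧸ Z)) : Set (G ⧸ Z))) * Nat.card ↥Z = m * d * Nat.card ↥R := by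
      rw [← hcard, hcardN, hNmap]
    have hbz : b * Nat.card ↥Z = m * ℓ ^ k := by
      have h1 := hcard2
      rw [hb, hk] at h1
      have h2 : d * (b * Nat.card ↥Z) = d * (m * ℓ ^ k) := by ring_nf; ring_nf at h1; linarith
      exact Nat.eq_of_mul_eq_mul_left (Nat.pos_of_ne_zero hd0) h2
    have hcop : (ℓ ^ k).Coprime (Nat.card ↥Z) :=
      Nat.Coprime.pow_left _ ((Nat.Prime.coprime_iff_not_dvd hℓ).2 hZℓ)
    have hdvd2 : ℓ ^ k ∣ b := by
      refine Nat.Coprime.dvd_of_dvd_mul_right hcop ?_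
      exact ⟨m, by rw [hbz, mul_comm]⟩
    obtain ⟨m', hm'⟩ := hdvd2
    have hmm : Nat.card ↥Z * m' = m := by
      have h9 : ℓ ^ k * (Nat.card ↥Z * m') = ℓ ^ k * m := by
        have := hbz
        rw [hm'] at this
        ring_nf
        ring_nf at this
        linarith
      exact Nat.eq_of_mul_eq_mul_left (pow_pos hℓ.pos k) h9
    have hℓm' : ¬ ℓ ∣ m' := by
      intro hdd
      exact hm (dvd_trans hdd ⟨Nat.card ↥Z, by rw [← hmm]; ring⟩)
    refine ⟨d, m', hℓm', ?_, ?_⟩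
    · rw [hφbar1, hd]
    · rw [hb, hm', hcardR, hk]
      ring
end
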